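/- arXiv:1606.00121 — 5 statements merged into one kernel-verified Lean document; each statement's English description precedes it below -/
import Mathlib

section
/- (Discrete Green's formula) Let B be a bounded subset of Z_h^2 and f: closure(B) → R, where closure(B) = B ∪ ∂B. Then for i = 1, 2: the sum over z ∈ ∂B of f(z) n_i^{±}(z) s(z) equals h^2 times the sum over z ∈ B of ∂_i^{∓,h}f(z). Equivalently, ∫_{∂B} f n_i^{±} dS = ∫_B ∂_i^{∓,h} f dV^h. -/
noncomputable section
open Complex MeasureTheory Set
open scoped ENNReal

/-- The scaled square lattice `Z_h^2 ⊂ ℂ`. -/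
def latt (h : ℝ) : Set ℂ := {z | ∃ m n : ℤ, z = h * ((m : ℂ) + (n : ℂ) * Complex.I)}

/-- Characteristic function of `B`. -/
def chi (B : Set ℂ) : ℂ → ℝ := B.indicator fun _ => (1 : ℝ)

/-- Forward difference quotient in direction `1` with step `h`. -/
def dp1 (h : ℝ) (f : ℂ → ℝ) (z : ℂ) : ℝ := (f (z + h) - f z) / h
/-- Backward difference quotient in direction `1` with step `h`. -/
def dm1 (h : ℝ) (f : ℂ → ℝ) (z : ℂ) : ℝ := (f z - f (z - h)) / h
/-- Forward difference quotient in direction `i` with step `h`. -/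
def dp2 (h : ℝ) (f : ℂ → ℝ) (z : ℂ) : ℝ := (f (z + h * Complex.I) - f z) / h
/-- Backward difference quotient in direction `i` with step `h`. -/
def dm2 (h : ℝ) (f : ℂ → ℝ) (z : ℂ) : ℝ := (f z - f (z - h * Complex.I)) / h

/-- `Σ_{i=1,2} (∂_i^{+,h}χ_B)^2 + (∂_i^{-,h}χ_B)^2`. -/
def Qsum (h : ℝ) (B : Set ℂ) (z : ℂ) : ℝ :=
  (dp1 h (chi B) z) ^ 2 + (dm1 h (chi B) z) ^ 2 + (dp2 h (chi B) z) ^ 2 + (dm2 h (chi B) z) ^ 2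

/-- Density of the discrete boundary measure. -/
def sden (h : ℝ) (B : Set ℂ) (z : ℂ) : ℝ := (h ^ 2 / 2) * Real.sqrt (Qsum h B z)

/-- Components of the discrete outer normal vector (extended by zero, since `x/0 = 0`). -/
def n1p (h : ℝ) (B : Set ℂ) (z : ℂ) : ℝ := -2 * dp1 h (chi B) z / Real.sqrt (Qsum h B z)
def n1m (h : ℝ) (B : Set ℂ) (z : ℂ) : ℝ := -2 * dm1 h (chi B) z / Real.sqrt (Qsum h B z)
def n2p (h : ℝ) (B : Set ℂ) (z : ℂ) : ℝ := -2 * dp2 h (chi B) z / Real.sqrt (Qsum h B z)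
def n2m (h : ℝ) (B : Set ℂ) (z : ℂ) : ℝ := -2 * dm2 h (chi B) z / Real.sqrt (Qsum h B z)

/-- Five-point neighbourhood `N(z) = {z, z±h, z±hi}`. -/
def nbhd (h : ℝ) (z : ℂ) : Set ℂ := {z, z + h, z - h, z + h * Complex.I, z - h * Complex.I}

/-- Discrete boundary of `B ⊆ Z_h^2`. -/
def dBdry (h : ℝ) (B : Set ℂ) : Set ℂ :=
  {z ∈ latt h | (nbhd h z ∩ B).Nonempty ∧ (nbhd h z \ B).Nonempty}

/-- Discrete interior. -/
def dInt (h : ℝ) (B : Set ℂ) : Set ℂ := B \ dBdry h B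

/-- Discrete closure. -/
def dCl (h : ℝ) (B : Set ℂ) : Set ℂ := B ∪ dBdry h B

/-- Complex forward/backward/symmetric differences, and the discrete ∂̄ and ∂ operators. -/
def cdp1 (h : ℝ) (f : ℂ → ℂ) (z : ℂ) : ℂ := (f (z + h) - f z) / h
def cdm1 (h : ℝ) (f : ℂ → ℂ) (z : ℂ) : ℂ := (f z - f (z - h)) / h
def cdp2 (h : ℝ) (f : ℂ → ℂ) (z : ℂ) : ℂ := (f (z + h * Complex.I) - f z) / h
def cdm2 (h : ℝ) (f : ℂ → ℂ) (z : ℂ) : ℂ := (f z - f (z - h * Complex.I)) / h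

def dbarC (h : ℝ) (f : ℂ → ℂ) (z : ℂ) : ℂ :=
  (1 / 2) * ((1 / 2) * (cdp1 h f z + cdm1 h f z) + Complex.I * ((1 / 2) * (cdp2 h f z + cdm2 h f z)))

def dzC (h : ℝ) (f : ℂ → ℂ) (z : ℂ) : ℂ :=
  (1 / 2) * ((1 / 2) * (cdp1 h f z + cdm1 h f z) - Complex.I * ((1 / 2) * (cdp2 h f z + cdm2 h f z)))

/-- Symmetric differences on the integer lattice `ℤ²`. -/
def D1 (f : ℤ × ℤ → ℂ) (p : ℤ × ℤ) : ℂ := (f (p.1 + 1, p.2) - f (p.1 - 1, p.2)) / 2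
def D2 (f : ℤ × ℤ → ℂ) (p : ℤ × ℤ) : ℂ := (f (p.1, p.2 + 1) - f (p.1, p.2 - 1)) / 2

def dbarZ (f : ℤ × ℤ → ℂ) (p : ℤ × ℤ) : ℂ := (1 / 2) * (D1 f p + Complex.I * D2 f p)
def dzZ (f : ℤ × ℤ → ℂ) (p : ℤ × ℤ) : ℂ := (1 / 2) * (D1 f p - Complex.I * D2 f p)

/-- The fundamental solution of the discrete ∂̄-operator on `ℤ²`. -/
def Efun (p : ℤ × ℤ) : ℂ :=
  (1 / (4 * Real.pi ^ 2)) •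
    ∫ w in (Set.Icc (-Real.pi) Real.pi ×ˢ Set.Icc (-Real.pi) Real.pi),
      (2 / (Complex.I * Real.sin w.1 - Real.sin w.2)) *
        Complex.exp (Complex.I * (w.1 * p.1 + w.2 * p.2))

/-- The rescaled fundamental solution `E^h(z) = (1/h) E(z/h)` on `Z_h^2`. -/
def Eh (h : ℝ) (z : ℂ) : ℂ := (1 / h : ℂ) * Efun (round (z.re / h), round (z.im / h))

/-- The discrete delta `δ_0^h` on `Z_h^2`. -/
def deltah (h : ℝ) (z : ℂ) : ℂ := if z = 0 then (1 / h ^ 2 : ℂ) else 0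

/-- The discrete Bochner-Martinelli kernel. -/
def Kker (h : ℝ) (B : Set ℂ) (z ζ : ℂ) : ℂ :=
  (-(Eh h ((h : ℂ) - (z - ζ))) / 4) * (n1m h B z : ℂ) +
  (-(Eh h (-(h : ℂ) - (z - ζ))) / 4) * (n1p h B z : ℂ) +
  Complex.I * (-(Eh h ((h : ℂ) * Complex.I - (z - ζ))) / 4) * (n2m h B z : ℂ) +
  Complex.I * (-(Eh h (-((h : ℂ) * Complex.I) - (z - ζ))) / 4) * (n2p h B z : ℂ)

/-- Convergence of lattice sets `B^h` to a bounded open set `B ⊂ ℂ`. -/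
def ConvergesTo (Bh : ℝ → Set ℂ) (B : Set ℂ) : Prop :=
  ∀ ε > 0, ∃ δ > 0, ∀ h : ℝ, 0 < h → h < δ →
    (∀ α ∈ frontier B, ∃ β ∈ dBdry h (Bh h), dist α β < ε) ∧
    (∀ α ∈ dBdry h (Bh h), ∃ β ∈ frontier B, dist α β < ε) ∧
    (∀ α ∈ closure B, ∃ β ∈ Bh h, dist α β < ε) ∧
    (∀ α ∈ Bh h, ∃ β ∈ closure B, dist α β < ε)




private lemma tsum_set_eq {s : Set ℂ} (hs : s.Finite) (g : ℂ → ℝ) :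
    ∑' z : s, g z = ∑ z ∈ hs.toFinset, g z := by
  haveI := hs.fintype
  rw [tsum_fintype]
  exact (Finset.sum_subtype hs.toFinset (fun x => hs.mem_toFinset) g).symm

private lemma latt_ball_finite (h : ℝ) (hh : 0 < h) (R : ℝ) :
    (latt h ∩ Metric.closedBall (0:ℂ) R).Finite := by
  have key : ∀ m : ℤ, h * |(m:ℝ)| ≤ R → m ∈ Set.Icc (-⌈R/h⌉) ⌈R/h⌉ := by
    intro m hm
    have h1 : (|m| : ℝ) ≤ R / h := by
      rw [le_div_iff₀ hh]; rw [mul_comm] at hm; exact_mod_cast hm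
    have h2 : (|m| : ℤ) ≤ ⌈R/h⌉ := by
      exact_mod_cast h1.trans (Int.le_ceil _)
    exact Set.mem_Icc.mpr ⟨(abs_le.mp h2).1, (abs_le.mp h2).2⟩
  have hsub : latt h ∩ Metric.closedBall (0:ℂ) R ⊆
      (fun p : ℤ × ℤ => (h:ℂ) * ((p.1 : ℂ) + (p.2 : ℂ) * Complex.I)) ''
        (Set.Icc (-⌈R/h⌉) ⌈R/h⌉ ×ˢ Set.Icc (-⌈R/h⌉) ⌈R/h⌉) := by
    rintro z ⟨⟨m, n, rfl⟩, hz⟩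
    have habs : ‖(h:ℂ) * ((m : ℂ) + (n : ℂ) * Complex.I)‖ ≤ R := by
      simpa [Complex.dist_eq] using Metric.mem_closedBall.mp hz
    have hre : ((h:ℂ) * ((m : ℂ) + (n : ℂ) * Complex.I)).re = h * m := by simp
    have him : ((h:ℂ) * ((m : ℂ) + (n : ℂ) * Complex.I)).im = h * n := by simp
    have h1 : h * |(m:ℝ)| ≤ R := by
      have := Complex.abs_re_le_norm ((h:ℂ) * ((m : ℂ) + (n : ℂ) * Complex.I))
      rw [hre, abs_mul, abs_of_pos hh] at this
      exact this.trans habs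
    have h2 : h * |(n:ℝ)| ≤ R := by
      have := Complex.abs_im_le_norm ((h:ℂ) * ((m : ℂ) + (n : ℂ) * Complex.I))
      rw [him, abs_mul, abs_of_pos hh] at this
      exact this.trans habs
    exact ⟨(m, n), Set.mk_mem_prod (key m h1) (key n h2), rfl⟩
  exact (((Set.finite_Icc _ _).prod (Set.finite_Icc _ _)).image _).subset hsub

private lemma dist_nbhd (h : ℝ) (hh : 0 < h) (z w : ℂ) (hw : w ∈ nbhd h z) :
    dist z w ≤ h := by
  simp only [nbhd, Set.mem_insert_iff, Set.mem_singleton_iff] at hw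
  have hnorm : ‖(h:ℂ)‖ = h := by
    rw [Complex.norm_real, Real.norm_eq_abs, abs_of_pos hh]
  rcases hw with rfl | rfl | rfl | rfl | rfl
  · simp [hh.le]
  · rw [dist_eq_norm]; simp [hnorm, abs_of_pos hh]
  · rw [dist_eq_norm]; simp [hnorm, abs_of_pos hh]
  · rw [dist_eq_norm]
    have : z - (z + (h:ℂ) * Complex.I) = -((h:ℂ) * Complex.I) := by ring
    rw [this, norm_neg, norm_mul, hnorm, Complex.norm_I, mul_one]
  · rw [dist_eq_norm]
    have : z - (z - (h:ℂ) * Complex.I) = (h:ℂ) * Complex.I := by ring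
    rw [this, norm_mul, hnorm, Complex.norm_I, mul_one]

private lemma fin_pair (h : ℝ) (hh : 0 < h) (B : Set ℂ) (hB : B ⊆ latt h)
    (hbd : Bornology.IsBounded B) : B.Finite ∧ (dBdry h B).Finite := by
  obtain ⟨R, hR⟩ := hbd.subset_closedBall 0
  have hfin := latt_ball_finite h hh (R + h)
  constructor
  · exact hfin.subset fun z hz =>
      ⟨hB hz, Metric.closedBall_subset_closedBall (by linarith) (hR hz)⟩
  · refine hfin.subset ?_
    rintro z ⟨hzl, ⟨w, hwn, hwB⟩, -⟩
    refine ⟨hzl, Metric.mem_closedBall.mpr ?_⟩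
    calc dist z 0 ≤ dist z w + dist w 0 := dist_triangle _ _ _
      _ ≤ h + R := add_le_add (dist_nbhd h hh z w hwn) (hR hwB)
      _ = R + h := by ring

private lemma self_mem_nbhd (h : ℝ) (z : ℂ) : z ∈ nbhd h z := by
  simp [nbhd]

/-- Summation by parts on the lattice. -/
private lemma key (h : ℝ) (hh : 0 < h) (B : Set ℂ) (hB : B ⊆ latt h)
    (hBf : B.Finite) (hDf : (dBdry h B).Finite) (f : ℂ → ℝ) (t : ℂ)
    (htn : ∀ z : ℂ, z + t ∈ nbhd h z) (htl : ∀ z ∈ latt h, z - t ∈ latt h) :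
    ∑ z ∈ hDf.toFinset, f z * (chi B z - chi B (z + t))
      = ∑ z ∈ hBf.toFinset, (f z - f (z - t)) := by
  classical
  set Bf := hBf.toFinset with hBfdef
  set Df := hDf.toFinset with hDfdef
  set Sf := (Bf ∪ Df) ∪ Bf.image (fun z => z - t) with hSfdef
  have hmemB : ∀ z, z ∈ Bf ↔ z ∈ B := fun z => hBf.mem_toFinset
  have hmemD : ∀ z, z ∈ Df ↔ z ∈ dBdry h B := fun z => hDf.mem_toFinset
  have hSlatt : ∀ z ∈ Sf, z ∈ latt h := by
    intro z hz
    rw [hSfdef] at hz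
    simp only [Finset.mem_union, Finset.mem_image] at hz
    rcases hz with (hz | hz) | ⟨w, hw, rfl⟩
    · exact hB ((hmemB z).mp hz)
    · exact ((hmemD z).mp hz).1
    · exact htl _ (hB ((hmemB w).mp hw))
  have hDS : Df ⊆ Sf := by
    intro z hz; rw [hSfdef]
    exact Finset.mem_union_left _ (Finset.mem_union_right _ hz)
  have hBS : Bf ⊆ Sf := by
    intro z hz; rw [hSfdef]
    exact Finset.mem_union_left _ (Finset.mem_union_left _ hz)
  have step2 : ∑ z ∈ Df, f z * (chi B z - chi B (z + t))
      = ∑ z ∈ Sf, f z * (chi B z - chi B (z + t)) := by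
    refine Finset.sum_subset hDS ?_
    intro z hzS hzD
    have hzl : z ∈ latt h := hSlatt z hzS
    have hznb : z ∉ dBdry h B := fun hc => hzD ((hmemD z).mpr hc)
    by_cases hzB : z ∈ B
    · have hzt : z + t ∈ B := by
        by_contra hc
        exact hznb ⟨hzl, ⟨z, self_mem_nbhd h z, hzB⟩, ⟨z + t, htn z, hc⟩⟩
      simp [chi, Set.indicator_of_mem, hzB, hzt]
    · have hzt : z + t ∉ B := by
        intro hc
        exact hznb ⟨hzl, ⟨z + t, htn z, hc⟩, ⟨z, self_mem_nbhd h z, hzB⟩⟩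
      simp [chi, Set.indicator_of_notMem, hzB, hzt]
  have step4 : ∑ z ∈ Sf, f z * chi B z = ∑ z ∈ Bf, f z := by
    rw [← Finset.sum_subset hBS (fun z _ hzB => by
      have hz : z ∉ B := fun hc => hzB ((hmemB z).mpr hc)
      simp [chi, Set.indicator_of_notMem, hz])]
    refine Finset.sum_congr rfl fun z hz => ?_
    have : z ∈ B := (hmemB z).mp hz
    simp [chi, Set.indicator_of_mem, this]
  have step5 : ∑ z ∈ Sf, f z * chi B (z + t) = ∑ z ∈ Bf, f (z - t) := by
    have himg : ∑ w ∈ Sf.image (fun z => z + t), f (w - t) * chi B w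
        = ∑ z ∈ Sf, f z * chi B (z + t) := by
      rw [Finset.sum_image (fun a _ b _ hab => by
        exact add_right_cancel hab)]
      exact Finset.sum_congr rfl fun z _ => by rw [add_sub_cancel_right]
    have hBimg : Bf ⊆ Sf.image (fun z => z + t) := by
      intro w hw
      refine Finset.mem_image.mpr ⟨w - t, ?_, by ring⟩
      rw [hSfdef]
      exact Finset.mem_union_right _ (Finset.mem_image.mpr ⟨w, hw, rfl⟩)
    rw [← himg, ← Finset.sum_subset hBimg (fun w _ hwB => by
      have hw : w ∉ B := fun hc => hwB ((hmemB w).mpr hc)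
      simp [chi, Set.indicator_of_notMem, hw])]
    refine Finset.sum_congr rfl fun w hw => ?_
    have : w ∈ B := (hmemB w).mp hw
    simp [chi, Set.indicator_of_mem, this]
  calc ∑ z ∈ Df, f z * (chi B z - chi B (z + t))
      = ∑ z ∈ Sf, f z * (chi B z - chi B (z + t)) := step2
    _ = ∑ z ∈ Sf, (f z * chi B z - f z * chi B (z + t)) := by
        refine Finset.sum_congr rfl fun z _ => by ring
    _ = ∑ z ∈ Sf, f z * chi B z - ∑ z ∈ Sf, f z * chi B (z + t) :=
        Finset.sum_sub_distrib _ _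
    _ = ∑ z ∈ Bf, f z - ∑ z ∈ Bf, f (z - t) := by rw [step4, step5]
    _ = ∑ z ∈ Bf, (f z - f (z - t)) := (Finset.sum_sub_distrib _ _).symm

private lemma nsden (h : ℝ) (B : Set ℂ) (z : ℂ) (a : ℝ) (ha : a ^ 2 ≤ Qsum h B z) :
    -2 * a / Real.sqrt (Qsum h B z) * sden h B z = -h ^ 2 * a := by
  have hQ0 : 0 ≤ Qsum h B z := le_trans (sq_nonneg a) ha
  rcases eq_or_lt_of_le hQ0 with hQ | hQ
  · have ha0 : a = 0 := by nlinarith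
    simp [ha0]
  · have hs : Real.sqrt (Qsum h B z) ≠ 0 := ne_of_gt (Real.sqrt_pos.mpr hQ)
    unfold sden
    set s := Real.sqrt (Qsum h B z)
    have : -2 * a / s * (h ^ 2 / 2 * s) = -h ^ 2 * a * (s / s) := by ring
    rw [this, div_self hs, mul_one]

/-- Discrete Green's formula: `∫_{∂B} f n_i^± dS = ∫_B ∂_i^{∓,h} f dV^h`
for `i = 1, 2`, i.e. `Σ_{z∈∂B} f(z) n_i^±(z) s(z) = h² Σ_{z∈B} ∂_i^{∓,h}f(z)`. -/
theorem stmt3 (h : ℝ) (hh : 0 < h) (B : Set ℂ) (hB : B ⊆ latt h)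
    (hbd : Bornology.IsBounded B) (f : ℂ → ℝ) :
    (∑' z : (dBdry h B), f z * n1p h B z * sden h B z = h ^ 2 * ∑' z : B, dm1 h f z) ∧
    (∑' z : (dBdry h B), f z * n1m h B z * sden h B z = h ^ 2 * ∑' z : B, dp1 h f z) ∧
    (∑' z : (dBdry h B), f z * n2p h B z * sden h B z = h ^ 2 * ∑' z : B, dm2 h f z) ∧
    (∑' z : (dBdry h B), f z * n2m h B z * sden h B z = h ^ 2 * ∑' z : B, dp2 h f z) := by
  obtain ⟨hBf, hDf⟩ := fin_pair h hh B hB hbd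
  have hne : h ≠ 0 := ne_of_gt hh
  have hQ1p : ∀ z, (dp1 h (chi B) z) ^ 2 ≤ Qsum h B z := fun z => by
    unfold Qsum
    nlinarith [sq_nonneg (dm1 h (chi B) z), sq_nonneg (dp2 h (chi B) z),
      sq_nonneg (dm2 h (chi B) z)]
  have hQ1m : ∀ z, (dm1 h (chi B) z) ^ 2 ≤ Qsum h B z := fun z => by
    unfold Qsum
    nlinarith [sq_nonneg (dp1 h (chi B) z), sq_nonneg (dp2 h (chi B) z),
      sq_nonneg (dm2 h (chi B) z)]
  have hQ2p : ∀ z, (dp2 h (chi B) z) ^ 2 ≤ Qsum h B z := fun z => by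
    unfold Qsum
    nlinarith [sq_nonneg (dp1 h (chi B) z), sq_nonneg (dm1 h (chi B) z),
      sq_nonneg (dm2 h (chi B) z)]
  have hQ2m : ∀ z, (dm2 h (chi B) z) ^ 2 ≤ Qsum h B z := fun z => by
    unfold Qsum
    nlinarith [sq_nonneg (dp1 h (chi B) z), sq_nonneg (dm1 h (chi B) z),
      sq_nonneg (dp2 h (chi B) z)]
  have keyA := key h hh B hB hBf hDf f (h : ℂ)
    (fun z => by simp [nbhd])
    (by rintro z ⟨m, n, rfl⟩; exact ⟨m - 1, n, by push_cast; ring⟩)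
  have keyB := key h hh B hB hBf hDf f (-(h : ℂ))
    (fun z => by simp [nbhd, sub_eq_add_neg])
    (by rintro z ⟨m, n, rfl⟩; exact ⟨m + 1, n, by push_cast; ring⟩)
  have keyB' : ∑ z ∈ hDf.toFinset, f z * (chi B z - chi B (z - (h:ℂ)))
      = ∑ z ∈ hBf.toFinset, (f z - f (z + (h:ℂ))) := by
    simpa [sub_eq_add_neg] using keyB
  have keyC := key h hh B hB hBf hDf f ((h : ℂ) * Complex.I)
    (fun z => by simp [nbhd])
    (by rintro z ⟨m, n, rfl⟩; exact ⟨m, n - 1, by push_cast; ring⟩)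
  have keyD := key h hh B hB hBf hDf f (-((h : ℂ) * Complex.I))
    (fun z => by simp [nbhd, sub_eq_add_neg])
    (by rintro z ⟨m, n, rfl⟩; exact ⟨m, n + 1, by push_cast; ring⟩)
  have keyD' : ∑ z ∈ hDf.toFinset, f z * (chi B z - chi B (z - (h:ℂ) * Complex.I))
      = ∑ z ∈ hBf.toFinset, (f z - f (z + (h:ℂ) * Complex.I)) := by
    simpa [sub_eq_add_neg] using keyD
  refine ⟨?_, ?_, ?_, ?_⟩
  · rw [tsum_set_eq hDf (fun z => f z * n1p h B z * sden h B z), tsum_set_eq hBf (dm1 h f)]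
    calc (∑ z ∈ hDf.toFinset, f z * n1p h B z * sden h B z)
        = ∑ z ∈ hDf.toFinset, h * (f z * (chi B z - chi B (z + (h:ℂ)))) := by
          refine Finset.sum_congr rfl fun z _ => ?_
          have e1 : n1p h B z * sden h B z = -h ^ 2 * dp1 h (chi B) z :=
            nsden h B z _ (hQ1p z)
          rw [mul_assoc, e1]
          unfold dp1
          field_simp
          ring
      _ = h * ∑ z ∈ hDf.toFinset, f z * (chi B z - chi B (z + (h:ℂ))) :=
          (Finset.mul_sum _ _ _).symm
      _ = h * ∑ z ∈ hBf.toFinset, (f z - f (z - (h:ℂ))) := by rw [keyA]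
      _ = h ^ 2 * ∑ z ∈ hBf.toFinset, dm1 h f z := by
          rw [Finset.mul_sum, Finset.mul_sum]
          refine Finset.sum_congr rfl fun z _ => ?_
          unfold dm1
          field_simp
  · rw [tsum_set_eq hDf (fun z => f z * n1m h B z * sden h B z), tsum_set_eq hBf (dp1 h f)]
    calc (∑ z ∈ hDf.toFinset, f z * n1m h B z * sden h B z)
        = ∑ z ∈ hDf.toFinset, -h * (f z * (chi B z - chi B (z - (h:ℂ)))) := by
          refine Finset.sum_congr rfl fun z _ => ?_
          have e1 : n1m h B z * sden h B z = -h ^ 2 * dm1 h (chi B) z :=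
            nsden h B z _ (hQ1m z)
          rw [mul_assoc, e1]
          unfold dm1
          field_simp
      _ = -h * ∑ z ∈ hDf.toFinset, f z * (chi B z - chi B (z - (h:ℂ))) :=
          (Finset.mul_sum _ _ _).symm
      _ = -h * ∑ z ∈ hBf.toFinset, (f z - f (z + (h:ℂ))) := by rw [keyB']
      _ = h ^ 2 * ∑ z ∈ hBf.toFinset, dp1 h f z := by
          rw [Finset.mul_sum, Finset.mul_sum]
          refine Finset.sum_congr rfl fun z _ => ?_
          unfold dp1
          field_simp
          ring
  · rw [tsum_set_eq hDf (fun z => f z * n2p h B z * sden h B z), tsum_set_eq hBf (dm2 h f)]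
    calc (∑ z ∈ hDf.toFinset, f z * n2p h B z * sden h B z)
        = ∑ z ∈ hDf.toFinset, h * (f z * (chi B z - chi B (z + (h:ℂ) * Complex.I))) := by
          refine Finset.sum_congr rfl fun z _ => ?_
          have e1 : n2p h B z * sden h B z = -h ^ 2 * dp2 h (chi B) z :=
            nsden h B z _ (hQ2p z)
          rw [mul_assoc, e1]
          unfold dp2
          field_simp
          ring
      _ = h * ∑ z ∈ hDf.toFinset, f z * (chi B z - chi B (z + (h:ℂ) * Complex.I)) :=
          (Finset.mul_sum _ _ _).symm
      _ = h * ∑ z ∈ hBf.toFinset, (f z - f (z - (h:ℂ) * Complex.I)) := by rw [keyC]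
      _ = h ^ 2 * ∑ z ∈ hBf.toFinset, dm2 h f z := by
          rw [Finset.mul_sum, Finset.mul_sum]
          refine Finset.sum_congr rfl fun z _ => ?_
          unfold dm2
          field_simp
  · rw [tsum_set_eq hDf (fun z => f z * n2m h B z * sden h B z), tsum_set_eq hBf (dp2 h f)]
    calc (∑ z ∈ hDf.toFinset, f z * n2m h B z * sden h B z)
        = ∑ z ∈ hDf.toFinset, -h * (f z * (chi B z - chi B (z - (h:ℂ) * Complex.I))) := by
          refine Finset.sum_congr rfl fun z _ => ?_
          have e1 : n2m h B z * sden h B z = -h ^ 2 * dm2 h (chi B) z :=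
            nsden h B z _ (hQ2m z)
          rw [mul_assoc, e1]
          unfold dm2
          field_simp
      _ = -h * ∑ z ∈ hDf.toFinset, f z * (chi B z - chi B (z - (h:ℂ) * Complex.I)) :=
          (Finset.mul_sum _ _ _).symm
      _ = -h * ∑ z ∈ hBf.toFinset, (f z - f (z + (h:ℂ) * Complex.I)) := by rw [keyD']
      _ = h ^ 2 * ∑ z ∈ hBf.toFinset, dp2 h f z := by
          rw [Finset.mul_sum, Finset.mul_sum]
          refine Finset.sum_congr rfl fun z _ => ?_
          unfold dp2
          field_simp
          ring

end
end

section
/- The function E(x,y) = (1/4π^2) ∫_{[−π,π]^2} (2/(i sin u − sin v)) e^{i(ux+vy)} du dv on Z^2 satisfies ∂_z̄^1 E = δ_0, where ∂_z̄^1 = (1/2)(∂_1^1 + i∂_2^1) with ∂_j^1 the symmetric difference with step 1, and δ_0 is the discrete Dirac delta (value 1 at the origin, 0 elsewhere). -/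
noncomputable section
open Complex MeasureTheory Set
open scoped ENNReal

open scoped Real

lemma cos_half : Real.cos (2⁻¹ * π) = 0 := by
  rw [show (2⁻¹ * π : ℝ) = π / 2 by ring]; exact Real.cos_pi_div_two

lemma habs (x : ℝ) : |x| ^ (-(1/2) : ℝ) = x ^ (-(1/2) : ℝ) + (-x) ^ (-(1/2) : ℝ) := by
  rcases lt_trichotomy x 0 with h | h | h
  · rw [abs_of_neg h, Real.rpow_def_of_neg h]
    simp [cos_half]
  · simp [h, Real.zero_rpow]
  · rw [abs_of_pos h, Real.rpow_def_of_neg (by linarith : -x < 0)]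
    simp [cos_half]

-- integrability of |u - c|^(-1/2) on an interval
lemma int_abs_rpow (c a b : ℝ) :
    IntervalIntegrable (fun u : ℝ => |u - c| ^ (-(1/2) : ℝ)) volume a b := by
  have h1 : IntervalIntegrable (fun u : ℝ => (u - c) ^ (-(1/2) : ℝ)) volume a b := by
    have := (intervalIntegral.intervalIntegrable_rpow' (by norm_num : (-1:ℝ) < -(1/2)) (a := a - c) (b := b - c))
    simpa using this.comp_sub_right c
  have h2 : IntervalIntegrable (fun u : ℝ => (-(u - c)) ^ (-(1/2) : ℝ)) volume a b := by
    have := (intervalIntegral.intervalIntegrable_rpow' (by norm_num : (-1:ℝ) < -(1/2)) (a := c - a) (b := c - b))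
    have := this.comp_sub_left c
    simpa [sub_eq_add_neg, neg_sub] using this
  simp only [neg_sub] at h2
  rw [show (fun u : ℝ => |u - c| ^ (-(1/2) : ℝ))
      = fun u => (u - c) ^ (-(1/2) : ℝ) + (c - u) ^ (-(1/2) : ℝ) from
    funext fun u => by rw [habs (u - c), neg_sub]]
  exact h1.add h2
def FF (u : ℝ) : ℝ :=
  (π/2) ^ ((1:ℝ)/2) *
    (|u| ^ (-(1/2):ℝ) + |u - π| ^ (-(1/2):ℝ) + |u + π| ^ (-(1/2):ℝ))

lemma FF_nonneg (u : ℝ) : 0 ≤ FF u := by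
  have h1 := Real.rpow_nonneg (abs_nonneg u) (-(1/2):ℝ)
  have h2 := Real.rpow_nonneg (abs_nonneg (u - π)) (-(1/2):ℝ)
  have h3 := Real.rpow_nonneg (abs_nonneg (u + π)) (-(1/2):ℝ)
  have h0 := Real.rpow_nonneg (by positivity : (0:ℝ) ≤ π/2) ((1:ℝ)/2)
  exact mul_nonneg h0 (by linarith)

lemma FF_intOn : IntegrableOn FF (Icc (-π) π) := by
  have h : IntervalIntegrable FF volume (-π) π := by
    have h1 := int_abs_rpow 0 (-π) π
    simp only [sub_zero] at h1
    have h2 := int_abs_rpow π (-π) π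
    have h3 := int_abs_rpow (-π) (-π) π
    simp only [sub_neg_eq_add] at h3
    exact ((h1.add h2).add h3).const_mul _
  rw [intervalIntegrable_iff_integrableOn_Icc_of_le (by linarith [Real.pi_pos])] at h
  exact h

lemma sin_lb (u : ℝ) (hu : u ∈ Icc (-π) π) :
    |Real.sin u| ^ (-(1/2):ℝ) ≤ FF u := by
  by_cases hs : Real.sin u = 0
  · rw [hs]; simpa using FF_nonneg u
  -- find t
  obtain ⟨t, ht2, hts, hta⟩ :
      ∃ t : ℝ, |t| ≤ π/2 ∧ |Real.sin u| = |Real.sin t| ∧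
        (|t| = |u| ∨ |t| = |u - π| ∨ |t| = |u + π|) := by
    obtain ⟨hu1, hu2⟩ := hu
    rcases le_or_gt u (-(π/2)) with h | h
    · refine ⟨u + π, by rw [abs_le]; constructor <;> linarith, ?_, Or.inr (Or.inr rfl)⟩
      rw [show u = (u + π) - π by ring, Real.sin_sub_pi, abs_neg,
        show (u + π) - π + π = u + π by ring]
    rcases le_or_gt (π/2) u with h' | h'
    · refine ⟨u - π, by rw [abs_le]; constructor <;> linarith, ?_, Or.inr (Or.inl rfl)⟩
      rw [show u = (u - π) + π by ring, Real.sin_add_pi, abs_neg,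
        show (u - π) + π - π = u - π by ring]
    · exact ⟨u, by rw [abs_le]; constructor <;> linarith, rfl, Or.inl rfl⟩
  have htne : t ≠ 0 := by
    rintro rfl
    simp at hts; exact hs hts
  have hjordan : 2/π * |t| ≤ |Real.sin u| := hts ▸ Real.mul_abs_le_abs_sin ht2
  have hpos : 0 < 2/π * |t| := by
    have := Real.pi_pos
    have : (0:ℝ) < 2/π := by positivity
    have h2 : 0 < |t| := abs_pos.mpr htne
    positivity
  have step1 : |Real.sin u| ^ (-(1/2):ℝ) ≤ (2/π * |t|) ^ (-(1/2):ℝ) :=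
    Real.rpow_le_rpow_of_nonpos hpos hjordan (by norm_num)
  have step2 : (2/π * |t|) ^ (-(1/2):ℝ) = (π/2) ^ ((1:ℝ)/2) * |t| ^ (-(1/2):ℝ) := by
    rw [Real.mul_rpow (by positivity) (abs_nonneg t)]
    congr 1
    rw [show (2/π : ℝ) = (π/2)⁻¹ by field_simp,
      Real.inv_rpow (by positivity), ← Real.rpow_neg (by positivity)]
    norm_num
  have step3 : |t| ^ (-(1/2):ℝ) ≤
      |u| ^ (-(1/2):ℝ) + |u - π| ^ (-(1/2):ℝ) + |u + π| ^ (-(1/2):ℝ) := by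
    have h1 := Real.rpow_nonneg (abs_nonneg u) (-(1/2):ℝ)
    have h2 := Real.rpow_nonneg (abs_nonneg (u - π)) (-(1/2):ℝ)
    have h3 := Real.rpow_nonneg (abs_nonneg (u + π)) (-(1/2):ℝ)
    rcases hta with h | h | h <;> rw [h] <;> linarith
  calc |Real.sin u| ^ (-(1/2):ℝ) ≤ (2/π * |t|) ^ (-(1/2):ℝ) := step1
    _ = (π/2) ^ ((1:ℝ)/2) * |t| ^ (-(1/2):ℝ) := step2
    _ ≤ FF u := by
        unfold FF
        have := Real.rpow_nonneg (by positivity : (0:ℝ) ≤ π/2) ((1:ℝ)/2)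
        nlinarith [step3]

abbrev sq2 : Set (ℝ × ℝ) := Icc (-π) π ×ˢ Icc (-π) π

lemma null_sin : (volume : Measure (ℝ × ℝ))
    {w : ℝ × ℝ | Real.sin w.1 = 0 ∨ Real.sin w.2 = 0} = 0 := by
  have hS : (volume : Measure ℝ) {x : ℝ | Real.sin x = 0} = 0 := by
    apply Set.Countable.measure_zero
    have : {x : ℝ | Real.sin x = 0} ⊆ Set.range (fun n : ℤ => (n : ℝ) * π) := by
      intro x hx
      obtain ⟨n, hn⟩ := Real.sin_eq_zero_iff.mp hx
      exact ⟨n, hn⟩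
    exact (Set.countable_range _).mono this
  have hsub : {w : ℝ × ℝ | Real.sin w.1 = 0 ∨ Real.sin w.2 = 0} ⊆
      ({x : ℝ | Real.sin x = 0} ×ˢ univ) ∪ (univ ×ˢ {x : ℝ | Real.sin x = 0}) := by
    rintro ⟨u, v⟩ (h | h)
    · exact Or.inl ⟨h, trivial⟩
    · exact Or.inr ⟨trivial, h⟩
  refine measure_mono_null hsub (measure_union_null ?_ ?_) <;>
    rw [Measure.volume_eq_prod, Measure.prod_prod] <;> simp [hS]

lemma norm_g (u v : ℝ) : ‖(2 : ℂ) / (I * Real.sin u - Real.sin v)‖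
    = 2 / Real.sqrt (Real.sin v ^ 2 + Real.sin u ^ 2) := by
  rw [norm_div]
  congr 1
  · simp
  · rw [Complex.norm_def, Complex.normSq_apply]
    simp only [Complex.sub_re, Complex.mul_re, Complex.I_re, Complex.ofReal_re,
      Complex.I_im, Complex.ofReal_im, Complex.sub_im, Complex.mul_im]
    ring_nf

lemma g_norm_bound (u v : ℝ) (hu : Real.sin u ≠ 0) (hv : Real.sin v ≠ 0) :
    ‖(2 : ℂ) / (I * Real.sin u - Real.sin v)‖ ≤
      2 * (|Real.sin u| ^ (-(1/2):ℝ) * |Real.sin v| ^ (-(1/2):ℝ)) := by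
  rw [norm_g]
  have hsu : 0 < |Real.sin u| := abs_pos.mpr hu
  have hsv : 0 < |Real.sin v| := abs_pos.mpr hv
  have h1 : |Real.sin u| ^ ((1:ℝ)/2) * |Real.sin v| ^ ((1:ℝ)/2)
      ≤ Real.sqrt (Real.sin v ^ 2 + Real.sin u ^ 2) := by
    have : |Real.sin u| ^ ((1:ℝ)/2) * |Real.sin v| ^ ((1:ℝ)/2)
        = Real.sqrt (|Real.sin u| * |Real.sin v|) := by
      rw [Real.sqrt_eq_rpow, Real.mul_rpow (le_of_lt hsu) (le_of_lt hsv)]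
    rw [this]
    apply Real.sqrt_le_sqrt
    nlinarith [_root_.sq_abs (Real.sin u), _root_.sq_abs (Real.sin v), sq_nonneg (|Real.sin u| - |Real.sin v|)]
  have hpos : 0 < |Real.sin u| ^ ((1:ℝ)/2) * |Real.sin v| ^ ((1:ℝ)/2) := by
    have := Real.rpow_pos_of_pos hsu ((1:ℝ)/2)
    have := Real.rpow_pos_of_pos hsv ((1:ℝ)/2)
    positivity
  have h2 : 2 / Real.sqrt (Real.sin v ^ 2 + Real.sin u ^ 2)
      ≤ 2 / (|Real.sin u| ^ ((1:ℝ)/2) * |Real.sin v| ^ ((1:ℝ)/2)) :=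
    div_le_div_of_nonneg_left (by norm_num) hpos h1
  refine h2.trans (le_of_eq ?_)
  rw [div_eq_mul_inv, mul_inv, ← Real.rpow_neg (le_of_lt hsu), ← Real.rpow_neg (le_of_lt hsv)]
  try ring_nf
  try ring

lemma exp_norm_one (x y : ℤ) (u v : ℝ) :
    ‖Complex.exp (I * ((u:ℂ) * x + (v:ℂ) * y))‖ = 1 := by
  rw [show ((u:ℂ) * x + (v:ℂ) * y) = ((u * x + v * y : ℝ) : ℂ) by push_cast; ring,
    Complex.norm_exp]
  simp

lemma Fi_int (x y : ℤ) : IntegrableOn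
    (fun w : ℝ × ℝ => (2 / (I * Real.sin w.1 - Real.sin w.2)) *
      Complex.exp (I * (w.1 * x + w.2 * y))) sq2 := by
  have hmeas : AEStronglyMeasurable
      (fun w : ℝ × ℝ => (2 / (I * Real.sin w.1 - Real.sin w.2)) *
        Complex.exp (I * (w.1 * x + w.2 * y)))
      ((volume : Measure (ℝ × ℝ)).restrict sq2) := by
    apply Measurable.aestronglyMeasurable
    apply Measurable.mul
    · exact measurable_const.div
        (((continuous_const.mul (Complex.continuous_ofReal.comp
            (Real.continuous_sin.comp continuous_fst))).sub
          (Complex.continuous_ofReal.comp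
            (Real.continuous_sin.comp continuous_snd))).measurable)
    · exact (Complex.continuous_exp.comp (continuous_const.mul
        (((Complex.continuous_ofReal.comp continuous_fst).mul continuous_const).add
          ((Complex.continuous_ofReal.comp continuous_snd).mul continuous_const)))).measurable
  have hBint : Integrable (fun w : ℝ × ℝ => (2 * FF w.1) * FF w.2)
      ((volume : Measure (ℝ × ℝ)).restrict sq2) := by
    have h1 : Integrable (fun u : ℝ => 2 * FF u) (volume.restrict (Icc (-π) π)) :=
      FF_intOn.const_mul 2
    have h2 : Integrable FF (volume.restrict (Icc (-π) π)) := FF_intOn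
    have := h1.mul_prod h2
    rwa [Measure.prod_restrict, ← Measure.volume_eq_prod] at this
  apply Integrable.mono' hBint hmeas
  have hae : ∀ᵐ w : ℝ × ℝ ∂(volume : Measure (ℝ × ℝ)).restrict sq2,
      Real.sin w.1 ≠ 0 ∧ Real.sin w.2 ≠ 0 := by
    apply ae_restrict_of_ae
    rw [ae_iff]
    apply measure_mono_null _ null_sin
    intro w hw
    simp only [mem_setOf_eq, not_and_or, not_not] at hw ⊢
    tauto
  filter_upwards [hae, ae_restrict_mem (measurableSet_Icc.prod measurableSet_Icc)]
    with w hw hws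
  rw [norm_mul, exp_norm_one x y, mul_one]
  calc ‖(2 : ℂ) / (I * Real.sin w.1 - Real.sin w.2)‖
      ≤ 2 * (|Real.sin w.1| ^ (-(1/2):ℝ) * |Real.sin w.2| ^ (-(1/2):ℝ)) :=
        g_norm_bound _ _ hw.1 hw.2
    _ ≤ (2 * FF w.1) * FF w.2 := by
        have b1 := sin_lb w.1 hws.1
        have b2 := sin_lb w.2 hws.2
        have n1 := Real.rpow_nonneg (abs_nonneg (Real.sin w.1)) (-(1/2):ℝ)
        have n2 := Real.rpow_nonneg (abs_nonneg (Real.sin w.2)) (-(1/2):ℝ)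
        have f1 := FF_nonneg w.1
        nlinarith


lemma oneD (n : ℤ) :
    (∫ u in Icc (-π) π, Complex.exp (I * ((u : ℂ) * (n : ℂ)))) =
      if n = 0 then ((2 * π : ℝ) : ℂ) else 0 := by
  rw [MeasureTheory.integral_Icc_eq_integral_Ioc,
    ← intervalIntegral.integral_of_le (by linarith [Real.pi_pos] : -π ≤ π)]
  by_cases hn : n = 0
  · subst hn
    simp only [Int.cast_zero, mul_zero, Complex.exp_zero, if_true]
    rw [intervalIntegral.integral_const, Complex.real_smul]
    push_cast
    ring
  · rw [if_neg hn]
    have harg : ∀ u : ℝ, I * ((u : ℂ) * (n : ℂ)) = (I * n) * u := by intro u; ring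
    simp_rw [harg]
    rw [integral_exp_mul_complex (by simp [Complex.I_ne_zero, hn] : (I * (n:ℂ)) ≠ 0)]
    have h1 : Complex.exp (I * (n:ℂ) * (π : ℂ)) = (-1 : ℂ) ^ n := by
      rw [show I * (n:ℂ) * (π : ℂ) = (n : ℂ) * ((π : ℂ) * I) by ring,
        Complex.exp_int_mul, Complex.exp_pi_mul_I]
    have h2 : Complex.exp (I * (n:ℂ) * ((-π : ℝ) : ℂ)) = ((-1 : ℂ) ^ n)⁻¹ := by
      push_cast
      rw [show I * (n:ℂ) * (-(π : ℂ)) = (-n : ℤ) * ((π : ℂ) * I) by push_cast; ring,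
        Complex.exp_int_mul, Complex.exp_pi_mul_I, zpow_neg]
    rw [h1, h2]
    have h3 : ((-1 : ℂ) ^ n)⁻¹ = (-1 : ℂ) ^ n := by
      apply inv_eq_of_mul_eq_one_right
      rw [← mul_zpow]
      norm_num
    rw [h3, sub_self, zero_div]

lemma sq_exp_int (x y : ℤ) :
    (∫ w in sq2, Complex.exp (I * ((w.1 : ℂ) * (x : ℂ) + (w.2 : ℂ) * (y : ℂ)))) =
      (if x = 0 then ((2 * π : ℝ) : ℂ) else 0) * (if y = 0 then ((2 * π : ℝ) : ℂ) else 0) := by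
  have hsplit : ∀ w : ℝ × ℝ,
      Complex.exp (I * ((w.1 : ℂ) * (x : ℂ) + (w.2 : ℂ) * (y : ℂ))) =
        Complex.exp (I * ((w.1 : ℂ) * (x : ℂ))) * Complex.exp (I * ((w.2 : ℂ) * (y : ℂ))) := by
    intro w
    rw [← Complex.exp_add]
    ring_nf
  simp_rw [hsplit]
  rw [show ((volume : Measure (ℝ × ℝ))) = (volume : Measure ℝ).prod volume from
    Measure.volume_eq_prod ℝ ℝ]
  rw [show sq2 = Icc (-π) π ×ˢ Icc (-π) π from rfl]
  exact (MeasureTheory.setIntegral_prod_mul (fun a : ℝ => Complex.exp (I * ((a:ℂ) * (x:ℂ))))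
    (fun b : ℝ => Complex.exp (I * ((b:ℂ) * (y:ℂ)))) _ _).trans (by rw [oneD x, oneD y])

def FiF (a b : ℤ) (w : ℝ × ℝ) : ℂ :=
  (2 / (Complex.I * Real.sin w.1 - Real.sin w.2)) *
    Complex.exp (Complex.I * (w.1 * a + w.2 * b))

lemma FiF_int (a b : ℤ) : IntegrableOn (FiF a b) sq2 := Fi_int a b

lemma hsin_exp (t : ℝ) :
    Complex.exp ((t : ℂ) * I) - Complex.exp (-(t : ℂ) * I) = 2 * I * (Real.sin t : ℂ) := by
  rw [Complex.ofReal_sin, Complex.sin]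
  linear_combination (Complex.exp ((t:ℂ) * I) - Complex.exp (-(t:ℂ) * I)) * Complex.I_sq

lemma HH_eq (u v : ℝ) (x y : ℤ)
    (hD : (I * (Real.sin u : ℂ) - (Real.sin v : ℂ)) ≠ 0) :
    (1/4 : ℂ) * FiF (x+1) y (u, v) - (1/4 : ℂ) * FiF (x-1) y (u, v) +
      (I/4) * FiF x (y+1) (u, v) - (I/4) * FiF x (y-1) (u, v) =
      Complex.exp (I * ((u : ℂ) * (x : ℂ) + (v : ℂ) * (y : ℂ))) := by
  have hE : ∀ a : ℂ, Complex.exp (I * ((u:ℂ) * (x:ℂ) + (v:ℂ) * (y:ℂ)) + a) =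
      Complex.exp (I * ((u:ℂ) * (x:ℂ) + (v:ℂ) * (y:ℂ))) * Complex.exp a :=
    fun a => Complex.exp_add _ a
  unfold FiF
  dsimp only
  push_cast
  rw [show I * ((u:ℂ) * ((x:ℂ)+1) + (v:ℂ) * (y:ℂ)) =
        I * ((u:ℂ) * (x:ℂ) + (v:ℂ) * (y:ℂ)) + (u:ℂ) * I by ring, hE]
  rw [show I * ((u:ℂ) * ((x:ℂ)-1) + (v:ℂ) * (y:ℂ)) =
        I * ((u:ℂ) * (x:ℂ) + (v:ℂ) * (y:ℂ)) + -(u:ℂ) * I by ring, hE]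
  rw [show I * ((u:ℂ) * (x:ℂ) + (v:ℂ) * ((y:ℂ)+1)) =
        I * ((u:ℂ) * (x:ℂ) + (v:ℂ) * (y:ℂ)) + (v:ℂ) * I by ring, hE]
  rw [show I * ((u:ℂ) * (x:ℂ) + (v:ℂ) * ((y:ℂ)-1)) =
        I * ((u:ℂ) * (x:ℂ) + (v:ℂ) * (y:ℂ)) + -(v:ℂ) * I by ring, hE]
  have h1 := hsin_exp u
  have h2 := hsin_exp v
  have key : (I * (Real.sin u : ℂ) - (Real.sin v : ℂ)) *
      (I * (Real.sin u : ℂ) - (Real.sin v : ℂ))⁻¹ = 1 := mul_inv_cancel₀ hD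
  simp only [Complex.ofReal_sin] at h1 h2 key
  set E : ℂ := Complex.exp (I * ((u:ℂ) * (x:ℂ) + (v:ℂ) * (y:ℂ))) with hEdef
  set sc : ℂ := Complex.sin (u:ℂ)
  set tc : ℂ := Complex.sin (v:ℂ)
  linear_combination (E * (I * sc - tc)⁻¹ / 2) * h1 + (I * E * (I * sc - tc)⁻¹ / 2) * h2 +
    (E * tc * (I * sc - tc)⁻¹) * Complex.I_sq + E * key

lemma D_ne (a b : ℝ) (ha : Real.sin a ≠ 0) :
    (I * (Real.sin a : ℂ) - (Real.sin b : ℂ)) ≠ 0 := by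
  intro h
  apply ha
  have := congrArg Complex.im h
  simpa [Complex.sin_ofReal_re] using this

theorem stmt6' : ∀ p : ℤ × ℤ, dbarZ Efun p = if p = (0, 0) then 1 else 0 := by
  intro p
  obtain ⟨x, y⟩ := p
  have hE : ∀ a b : ℤ, Efun (a, b) =
      (1 / (4 * Real.pi ^ 2) : ℝ) • ∫ w in sq2, FiF a b w := fun a b => rfl
  have i1 := (FiF_int (x+1) y)
  have i2 := (FiF_int (x-1) y)
  have i3 := (FiF_int x (y+1))
  have i4 := (FiF_int x (y-1))
  have hH : (∫ w in sq2, ((1/4 : ℂ) * FiF (x+1) y w - (1/4 : ℂ) * FiF (x-1) y w +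
        (I/4) * FiF x (y+1) w - (I/4) * FiF x (y-1) w))
      = (1/4 : ℂ) * (∫ w in sq2, FiF (x+1) y w) - (1/4 : ℂ) * (∫ w in sq2, FiF (x-1) y w) +
        (I/4) * (∫ w in sq2, FiF x (y+1) w) - (I/4) * (∫ w in sq2, FiF x (y-1) w) := by
    have e1 : Integrable (fun w : ℝ × ℝ => (1/4 : ℂ) * FiF (x+1) y w) (volume.restrict sq2) :=
      i1.const_mul _
    have e2 : Integrable (fun w : ℝ × ℝ => (1/4 : ℂ) * FiF (x-1) y w) (volume.restrict sq2) :=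
      i2.const_mul _
    have e3 : Integrable (fun w : ℝ × ℝ => (I/4) * FiF x (y+1) w) (volume.restrict sq2) :=
      i3.const_mul _
    have e4 : Integrable (fun w : ℝ × ℝ => (I/4) * FiF x (y-1) w) (volume.restrict sq2) :=
      i4.const_mul _
    have e12 : Integrable (fun w : ℝ × ℝ => (1/4 : ℂ) * FiF (x+1) y w -
        (1/4 : ℂ) * FiF (x-1) y w) (volume.restrict sq2) := e1.sub e2
    have e123 : Integrable (fun w : ℝ × ℝ => ((1/4 : ℂ) * FiF (x+1) y w -
        (1/4 : ℂ) * FiF (x-1) y w) + (I/4) * FiF x (y+1) w) (volume.restrict sq2) := e12.add e3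
    rw [integral_sub e123 e4, integral_add e12 e3, integral_sub e1 e2,
      integral_const_mul, integral_const_mul, integral_const_mul, integral_const_mul]
  have hHexp : (∫ w in sq2, ((1/4 : ℂ) * FiF (x+1) y w - (1/4 : ℂ) * FiF (x-1) y w +
        (I/4) * FiF x (y+1) w - (I/4) * FiF x (y-1) w))
      = ∫ w in sq2, Complex.exp (I * ((w.1 : ℂ) * (x : ℂ) + (w.2 : ℂ) * (y : ℂ))) := by
    apply integral_congr_ae
    have hae : ∀ᵐ w : ℝ × ℝ ∂(volume : Measure (ℝ × ℝ)).restrict sq2,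
        Real.sin w.1 ≠ 0 ∧ Real.sin w.2 ≠ 0 := by
      apply ae_restrict_of_ae
      rw [ae_iff]
      apply measure_mono_null _ null_sin
      intro w hw
      simp only [mem_setOf_eq, not_and_or, not_not] at hw ⊢
      tauto
    filter_upwards [hae] with w hw
    have := HH_eq w.1 w.2 x y (D_ne w.1 w.2 hw.1)
    simpa using this
  have hsq := sq_exp_int x y
  -- unfold dbarZ
  show (1/2 : ℂ) * (D1 Efun (x, y) + Complex.I * D2 Efun (x, y)) = _
  have hD1 : D1 Efun (x, y) = (Efun (x + 1, y) - Efun (x - 1, y)) / 2 := rfl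
  have hD2 : D2 Efun (x, y) = (Efun (x, y + 1) - Efun (x, y - 1)) / 2 := rfl
  rw [hD1, hD2, hE (x+1) y, hE (x-1) y, hE x (y+1), hE x (y-1)]
  rw [Complex.real_smul, Complex.real_smul, Complex.real_smul, Complex.real_smul]
  have hfinal : (1/2 : ℂ) *
      ((((1 / (4 * Real.pi ^ 2) : ℝ) : ℂ) * (∫ w in sq2, FiF (x+1) y w) -
          ((1 / (4 * Real.pi ^ 2) : ℝ) : ℂ) * (∫ w in sq2, FiF (x-1) y w)) / 2 +
        I * ((((1 / (4 * Real.pi ^ 2) : ℝ) : ℂ) * (∫ w in sq2, FiF x (y+1) w) -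
          ((1 / (4 * Real.pi ^ 2) : ℝ) : ℂ) * (∫ w in sq2, FiF x (y-1) w)) / 2))
      = ((1 / (4 * Real.pi ^ 2) : ℝ) : ℂ) *
        ((1/4 : ℂ) * (∫ w in sq2, FiF (x+1) y w) - (1/4 : ℂ) * (∫ w in sq2, FiF (x-1) y w) +
          (I/4) * (∫ w in sq2, FiF x (y+1) w) - (I/4) * (∫ w in sq2, FiF x (y-1) w)) := by
    ring
  rw [hfinal, ← hH, hHexp, hsq]
  have hpi : ((Real.pi : ℂ)) ≠ 0 := Complex.ofReal_ne_zero.mpr Real.pi_ne_zero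
  by_cases hx : x = 0
  · subst hx
    by_cases hy : y = 0
    · subst hy
      rw [if_pos rfl]
      push_cast
      field_simp
      simp
      norm_num
    · simp [hy, Prod.ext_iff]
  · simp [hx, Prod.ext_iff]

/-- `E` is the fundamental solution of the discrete ∂̄-operator on `ℤ²`:
`∂_z̄^1 E = δ_0`. -/
theorem stmt6 : ∀ p : ℤ × ℤ, dbarZ Efun p = if p = (0, 0) then 1 else 0 := stmt6'

end
end

section
/- (Discrete Cauchy-Pompeiu formula) Let B be a bounded subset of Z_h^2 and f: closure(B) → C. Then for every ζ ∈ Z_h^2: χ_B(ζ) f(ζ) = ∫_{∂B} K^h(z,ζ) f(z) dS(z) + ∫_B E^h(ζ−z) ∂_z̄^h f(z) dV^h(z), where K^h is the discrete Bochner-Martinelli kernel. -/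
noncomputable section
open Complex MeasureTheory Set
open scoped ENNReal

namespace CPaux
open Real MeasureTheory Set


def phi (x : ℝ) : ℝ := 1 / Real.sqrt |Real.sin x|

lemma phi_nonneg (x : ℝ) : 0 ≤ phi x := by
  unfold phi; positivity

lemma phi_neg (x : ℝ) : phi (-x) = phi x := by
  simp [phi, Real.sin_neg]

lemma phi_pi_sub (x : ℝ) : phi (π - x) = phi x := by
  simp [phi, Real.sin_pi_sub]

lemma phi_meas : Measurable phi := by
  unfold phi
  exact (Real.continuous_sqrt.measurable.comp Real.measurable_sin.abs).const_div 1

lemma phi_bound {x : ℝ} (hx : 0 ≤ x) (hx' : x ≤ π / 2) :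
    phi x ≤ Real.sqrt (π / 2) * x ^ (-(1/2) : ℝ) := by
  rcases eq_or_lt_of_le hx with h0 | h0
  · rw [← h0]
    simp [phi, Real.zero_rpow (by norm_num : (-(1/2) : ℝ) ≠ 0)]
  · have hs : 2 / π * x ≤ Real.sin x := Real.mul_le_sin hx hx'
    have hsp : 0 < 2 / π * x := by positivity
    have hsin : 0 < Real.sin x := lt_of_lt_of_le hsp hs
    have h1 : Real.sqrt (2 / π * x) ≤ Real.sqrt |Real.sin x| := by
      rw [abs_of_pos hsin]; exact Real.sqrt_le_sqrt hs
    have h2 : (0:ℝ) < Real.sqrt (2 / π * x) := Real.sqrt_pos.mpr hsp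
    have h3 : phi x ≤ 1 / Real.sqrt (2 / π * x) := by
      unfold phi
      exact one_div_le_one_div_of_le h2 h1
    refine h3.trans_eq ?_
    rw [Real.sqrt_mul (by positivity) x, Real.rpow_neg hx, ← Real.sqrt_eq_rpow,
      show (π/2 : ℝ) = (2/π)⁻¹ by rw [inv_div], ← Real.sqrt_inv]
    simp [Real.sqrt_inv]
    ring


lemma int_phi_base : IntervalIntegrable phi volume 0 (π / 2) := by
  have hle : (0:ℝ) ≤ π / 2 := by positivity
  rw [intervalIntegrable_iff_integrableOn_Ioc_of_le hle]
  have hint : IntegrableOn (fun x : ℝ => Real.sqrt (π / 2) * x ^ (-(1/2) : ℝ))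
      (Ioc 0 (π / 2)) volume := by
    have := (intervalIntegral.intervalIntegrable_rpow' (a := 0) (b := π / 2)
      (r := (-(1/2) : ℝ)) (by norm_num)).const_mul (Real.sqrt (π / 2))
    rwa [intervalIntegrable_iff_integrableOn_Ioc_of_le hle] at this
  refine hint.integrable.mono' (phi_meas.aestronglyMeasurable) ?_
  filter_upwards [ae_restrict_mem measurableSet_Ioc] with x hx
  rw [Real.norm_of_nonneg (phi_nonneg x)]
  exact phi_bound hx.1.le hx.2

lemma int_phi_refl : IntervalIntegrable phi volume (π / 2) π := by
  have h := int_phi_base.comp_sub_left π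
  have heq : (fun x => phi (π - x)) = phi := funext phi_pi_sub
  rw [heq] at h
  have h2 := h.symm
  have : π - π / 2 = π / 2 := by ring
  rw [this, sub_zero] at h2
  exact h2

lemma int_phi_neg1 : IntervalIntegrable phi volume (-(π / 2)) 0 := by
  have h := int_phi_base.comp_sub_left 0
  have heq : (fun x => phi (0 - x)) = phi := by
    funext x; rw [zero_sub, phi_neg]
  rw [heq] at h
  simpa using h.symm

lemma int_phi_neg2 : IntervalIntegrable phi volume (-π) (-(π / 2)) := by
  have h := int_phi_refl.comp_sub_left 0
  have heq : (fun x => phi (0 - x)) = phi := by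
    funext x; rw [zero_sub, phi_neg]
  rw [heq] at h
  simpa using h.symm

lemma int_phi : IntegrableOn phi (Icc (-π) π) volume := by
  have h : IntervalIntegrable phi volume (-π) π :=
    ((int_phi_neg2.trans int_phi_neg1).trans int_phi_base).trans int_phi_refl
  rw [intervalIntegrable_iff_integrableOn_Ioc_of_le (by linarith [Real.pi_pos] : -π ≤ π)] at h
  rwa [integrableOn_Icc_iff_integrableOn_Ioc]


def Qset : Set (ℝ × ℝ) := Icc (-π) π ×ˢ Icc (-π) π

def den (w : ℝ × ℝ) : ℂ := Complex.I * Real.sin w.1 - Real.sin w.2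

lemma den_meas : Measurable den := by
  unfold den
  exact (measurable_const.mul
    (Complex.measurable_ofReal.comp (Real.measurable_sin.comp measurable_fst))).sub
    (Complex.measurable_ofReal.comp (Real.measurable_sin.comp measurable_snd))

lemma sin_zero_countable : Set.Countable {x : ℝ | Real.sin x = 0} := by
  apply Set.Countable.mono ?_ (Set.countable_range (fun n : ℤ => (n : ℝ) * π))
  intro x hx
  obtain ⟨n, hn⟩ := Real.sin_eq_zero_iff.mp hx
  exact ⟨n, hn⟩

lemma null_fst : volume {w : ℝ × ℝ | Real.sin w.1 = 0} = 0 := by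
  have : {w : ℝ × ℝ | Real.sin w.1 = 0} = {x : ℝ | Real.sin x = 0} ×ˢ (univ : Set ℝ) := by
    ext w; simp [Set.mem_prod]
  rw [this, Measure.volume_eq_prod, Measure.prod_prod, sin_zero_countable.measure_zero, zero_mul]

lemma null_snd : volume {w : ℝ × ℝ | Real.sin w.2 = 0} = 0 := by
  have : {w : ℝ × ℝ | Real.sin w.2 = 0} = (univ : Set ℝ) ×ˢ {x : ℝ | Real.sin x = 0} := by
    ext w; simp [Set.mem_prod]
  rw [this, Measure.volume_eq_prod, Measure.prod_prod, sin_zero_countable.measure_zero, mul_zero]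

lemma den_norm_lb (w : ℝ × ℝ) :
    Real.sqrt (|Real.sin w.1| * |Real.sin w.2|) ≤ ‖den w‖ := by
  have h2 : ‖den w‖ = Real.sqrt (Real.sin w.1 ^ 2 + Real.sin w.2 ^ 2) := by
    rw [Complex.norm_def]
    congr 1
    simp [den, Complex.normSq_apply, Complex.sin_ofReal_re]
    ring
  rw [h2]
  apply Real.sqrt_le_sqrt
  nlinarith [sq_nonneg (|Real.sin w.1| - |Real.sin w.2|), _root_.sq_abs (Real.sin w.1),
    _root_.sq_abs (Real.sin w.2), abs_nonneg (Real.sin w.1), abs_nonneg (Real.sin w.2)]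

lemma int_phi2 : IntegrableOn (fun w : ℝ × ℝ => 2 * (phi w.1 * phi w.2)) Qset volume := by
  have h1 : Integrable (fun w : ℝ × ℝ => phi w.1 * phi w.2)
      ((volume.restrict (Icc (-π) π)).prod (volume.restrict (Icc (-π) π))) :=
    int_phi.mul_prod int_phi
  rw [Measure.prod_restrict] at h1
  have h2 : IntegrableOn (fun w : ℝ × ℝ => phi w.1 * phi w.2) Qset volume := by
    unfold IntegrableOn
    rw [Measure.volume_eq_prod]
    exact h1
  exact h2.const_mul 2

lemma exp_norm_one (z : ℝ) : ‖Complex.exp (Complex.I * z)‖ = 1 := by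
  rw [Complex.norm_exp]
  simp

lemma int_main (a b : ℤ) :
    IntegrableOn (fun w : ℝ × ℝ =>
      (2 / den w) * Complex.exp (Complex.I * (w.1 * a + w.2 * b))) Qset volume := by
  apply (int_phi2.integrable).mono'
  · apply Measurable.aestronglyMeasurable
    apply Measurable.mul
    · exact measurable_const.div den_meas
    · apply Complex.measurable_exp.comp
      apply measurable_const.mul
      apply Measurable.add
      · exact (Complex.measurable_ofReal.comp measurable_fst).mul measurable_const
      · exact (Complex.measurable_ofReal.comp measurable_snd).mul measurable_const
  · have hae : ∀ᵐ w : ℝ × ℝ ∂volume.restrict Qset,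
        Real.sin w.1 ≠ 0 ∧ Real.sin w.2 ≠ 0 := by
      apply ae_restrict_of_ae
      have h1 : ∀ᵐ w : ℝ × ℝ, Real.sin w.1 ≠ 0 :=
        (ae_iff (p := fun w : ℝ × ℝ => Real.sin w.1 ≠ 0)).mpr (by simpa using null_fst)
      have h2 : ∀ᵐ w : ℝ × ℝ, Real.sin w.2 ≠ 0 :=
        (ae_iff (p := fun w : ℝ × ℝ => Real.sin w.2 ≠ 0)).mpr (by simpa using null_snd)
      exact h1.and h2
    filter_upwards [hae] with w hw
    have hprod : (0:ℝ) < |Real.sin w.1| * |Real.sin w.2| := by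
      have := abs_pos.mpr hw.1
      have := abs_pos.mpr hw.2
      positivity
    have hs : (0:ℝ) < Real.sqrt (|Real.sin w.1| * |Real.sin w.2|) := Real.sqrt_pos.mpr hprod
    have hexp : ((w.1 : ℂ) * a + (w.2 : ℂ) * b) = ((w.1 * a + w.2 * b : ℝ) : ℂ) := by
      push_cast; ring
    rw [norm_mul, hexp, exp_norm_one, mul_one, norm_div]
    have hden : Real.sqrt (|Real.sin w.1| * |Real.sin w.2|) ≤ ‖den w‖ := den_norm_lb w
    have hphi : phi w.1 * phi w.2 = 1 / Real.sqrt (|Real.sin w.1| * |Real.sin w.2|) := by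
      unfold phi
      rw [Real.sqrt_mul (abs_nonneg _)]
      rw [div_mul_div_comm, one_mul]
    rw [hphi]
    have : ‖(2:ℂ)‖ = 2 := by norm_num
    rw [this]
    rw [div_le_iff₀ (lt_of_lt_of_le hs hden)]
    rw [mul_one_div, div_mul_eq_mul_div, le_div_iff₀ hs, mul_comm]
    have h2 : (2:ℝ) * Real.sqrt (|Real.sin w.1| * |Real.sin w.2|) ≤ 2 * ‖den w‖ := by
      linarith
    linarith [mul_le_mul_of_nonneg_left hden (by norm_num : (0:ℝ) ≤ 2)]


lemma exp_sub_exp (t : ℝ) :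
    Complex.exp (Complex.I * t) - Complex.exp (-(Complex.I * t)) =
      2 * Complex.I * Complex.sin t := by
  rw [Complex.sin]
  have h1 : (-(t:ℂ) * Complex.I) = -(Complex.I * t) := by ring
  have h2 : ((t:ℂ) * Complex.I) = Complex.I * t := by ring
  rw [h1, h2]
  linear_combination (Complex.exp (Complex.I * (t:ℂ)) - Complex.exp (-(Complex.I * (t:ℂ)))) *
    Complex.I_sq

lemma oneInt (n : ℤ) :
    (∫ t in Icc (-π) π, Complex.exp (Complex.I * t * n)) =
      if n = 0 then (2 * π : ℂ) else 0 := by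
  have hle : (-π : ℝ) ≤ π := by linarith [Real.pi_pos]
  rw [MeasureTheory.integral_Icc_eq_integral_Ioc,
    ← intervalIntegral.integral_of_le hle]
  by_cases hn : n = 0
  · subst hn
    simp only [Int.cast_zero, mul_zero, Complex.exp_zero]
    rw [intervalIntegral.integral_const]
    simp only [if_true]
    rw [Complex.real_smul]
    push_cast
    ring
  · rw [if_neg hn]
    have hc : (Complex.I * n : ℂ) ≠ 0 := by
      simp [Complex.I_ne_zero, Complex.ext_iff, hn]
    have heq : (fun t : ℝ => Complex.exp (Complex.I * t * n)) =
        fun t : ℝ => Complex.exp ((Complex.I * n) * t) := by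
      funext t; congr 1; ring
    rw [heq, integral_exp_mul_complex hc]
    have h1 : Complex.exp (Complex.I * n * π) = Complex.exp (-(Complex.I * (n * π : ℝ))) *
        Complex.exp ((n:ℂ) * (2 * π * Complex.I)) := by
      rw [← Complex.exp_add]; congr 1; push_cast; ring
    have h2 : Complex.exp (Complex.I * n * (-π : ℝ)) =
        Complex.exp (-(Complex.I * (n * π : ℝ))) := by
      congr 1; push_cast; ring
    rw [h1, h2, Complex.exp_int_mul_two_pi_mul_I, mul_one, sub_self, zero_div]

lemma efun_val (a b : ℤ) : Efun (a, b) =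
    ((1 / (4 * π^2) : ℝ) : ℂ) *
      ∫ w in Qset, (2 / den w) * Complex.exp (Complex.I * (w.1 * a + w.2 * b)) := by
  rw [Efun, Complex.real_smul]
  rfl

lemma den_ne_zero {w : ℝ × ℝ} (hw : Real.sin w.1 ≠ 0) : den w ≠ 0 := by
  intro h
  apply hw
  have := congrArg Complex.im h
  simpa [den, Complex.sin_ofReal_re] using this

lemma dbarZ_efun (p : ℤ × ℤ) : dbarZ Efun p = if p = 0 then 1 else 0 := by
  obtain ⟨p1, p2⟩ := p
  have hF : ∀ w : ℝ × ℝ, Complex.exp (Complex.I * (w.1 * p1 + w.2 * p2)) =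
      Complex.exp (Complex.I * w.1 * p1) * Complex.exp (Complex.I * w.2 * p2) := by
    intro w; rw [← Complex.exp_add]; congr 1; ring
  have i1 := int_main (p1+1) p2
  have i2 := int_main (p1-1) p2
  have i3 := int_main p1 (p2+1)
  have i4 := int_main p1 (p2-1)
  have hsum : (1/4 : ℂ) *
        ((∫ w in Qset, (2 / den w) * Complex.exp (Complex.I * (w.1 * (p1+1 : ℤ) + w.2 * p2))) -
         (∫ w in Qset, (2 / den w) * Complex.exp (Complex.I * (w.1 * (p1-1 : ℤ) + w.2 * p2)))) +
      (Complex.I/4) *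
        ((∫ w in Qset, (2 / den w) * Complex.exp (Complex.I * (w.1 * p1 + w.2 * (p2+1 : ℤ)))) -
         (∫ w in Qset, (2 / den w) * Complex.exp (Complex.I * (w.1 * p1 + w.2 * (p2-1 : ℤ))))) =
      ∫ w in Qset, Complex.exp (Complex.I * (w.1 * p1 + w.2 * p2)) := by
    have hs1 : Integrable (fun w : ℝ × ℝ =>
        (2 / den w) * Complex.exp (Complex.I * (w.1 * (p1+1 : ℤ) + w.2 * p2)) -
        (2 / den w) * Complex.exp (Complex.I * (w.1 * (p1-1 : ℤ) + w.2 * p2)))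
        (volume.restrict Qset) := i1.sub i2
    have hs2 : Integrable (fun w : ℝ × ℝ =>
        (2 / den w) * Complex.exp (Complex.I * (w.1 * p1 + w.2 * (p2+1 : ℤ))) -
        (2 / den w) * Complex.exp (Complex.I * (w.1 * p1 + w.2 * (p2-1 : ℤ))))
        (volume.restrict Qset) := i3.sub i4
    have hm1 : Integrable (fun w : ℝ × ℝ => (1/4 : ℂ) *
        ((2 / den w) * Complex.exp (Complex.I * (w.1 * (p1+1 : ℤ) + w.2 * p2)) -
        (2 / den w) * Complex.exp (Complex.I * (w.1 * (p1-1 : ℤ) + w.2 * p2))))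
        (volume.restrict Qset) := hs1.const_mul _
    have hm2 : Integrable (fun w : ℝ × ℝ => (Complex.I/4) *
        ((2 / den w) * Complex.exp (Complex.I * (w.1 * p1 + w.2 * (p2+1 : ℤ))) -
        (2 / den w) * Complex.exp (Complex.I * (w.1 * p1 + w.2 * (p2-1 : ℤ)))))
        (volume.restrict Qset) := hs2.const_mul _
    rw [← integral_sub i1 i2, ← integral_sub i3 i4, ← integral_const_mul (1/4 : ℂ),
      ← integral_const_mul (Complex.I/4), ← integral_add hm1 hm2]
    apply integral_congr_ae
    have h1 : ∀ᵐ w : ℝ × ℝ, Real.sin w.1 ≠ 0 :=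
      (ae_iff (p := fun w : ℝ × ℝ => Real.sin w.1 ≠ 0)).mpr (by simpa using null_fst)
    filter_upwards [ae_restrict_of_ae h1] with w hw
    have hden : den w ≠ 0 := den_ne_zero hw
    have e1 : Complex.exp (Complex.I * (w.1 * (p1+1 : ℤ) + w.2 * p2)) =
        Complex.exp (Complex.I * w.1) * Complex.exp (Complex.I * (w.1 * p1 + w.2 * p2)) := by
      rw [← Complex.exp_add]; congr 1; push_cast; ring
    have e2 : Complex.exp (Complex.I * (w.1 * (p1-1 : ℤ) + w.2 * p2)) =
        Complex.exp (-(Complex.I * w.1)) * Complex.exp (Complex.I * (w.1 * p1 + w.2 * p2)) := by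
      rw [← Complex.exp_add]; congr 1; push_cast; ring
    have e3 : Complex.exp (Complex.I * (w.1 * p1 + w.2 * (p2+1 : ℤ))) =
        Complex.exp (Complex.I * w.2) * Complex.exp (Complex.I * (w.1 * p1 + w.2 * p2)) := by
      rw [← Complex.exp_add]; congr 1; push_cast; ring
    have e4 : Complex.exp (Complex.I * (w.1 * p1 + w.2 * (p2-1 : ℤ))) =
        Complex.exp (-(Complex.I * w.2)) * Complex.exp (Complex.I * (w.1 * p1 + w.2 * p2)) := by
      rw [← Complex.exp_add]; congr 1; push_cast; ring
    have hden' : den w = Complex.I * Complex.sin w.1 - Complex.sin w.2 := by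
      simp [den, Complex.ofReal_sin]
    calc (1/4 : ℂ) * ((2 / den w) * Complex.exp (Complex.I * (w.1 * (p1+1 : ℤ) + w.2 * p2)) -
            (2 / den w) * Complex.exp (Complex.I * (w.1 * (p1-1 : ℤ) + w.2 * p2))) +
          (Complex.I/4) * ((2 / den w) * Complex.exp (Complex.I * (w.1 * p1 + w.2 * (p2+1 : ℤ))) -
            (2 / den w) * Complex.exp (Complex.I * (w.1 * p1 + w.2 * (p2-1 : ℤ))))
        = (2 / den w) *
            ((Complex.exp (Complex.I * w.1) - Complex.exp (-(Complex.I * w.1))) / 4 +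
              Complex.I * ((Complex.exp (Complex.I * w.2) - Complex.exp (-(Complex.I * w.2))) / 4)) *
            Complex.exp (Complex.I * (w.1 * p1 + w.2 * p2)) := by
          rw [e1, e2, e3, e4]; ring
      _ = (2 / den w) *
            ((2 * Complex.I * Complex.sin w.1) / 4 +
              Complex.I * ((2 * Complex.I * Complex.sin w.2) / 4)) *
            Complex.exp (Complex.I * (w.1 * p1 + w.2 * p2)) := by
          rw [exp_sub_exp w.1, exp_sub_exp w.2]
      _ = ((Complex.I * Complex.sin w.1 - Complex.sin w.2) / den w) *
            Complex.exp (Complex.I * (w.1 * p1 + w.2 * p2)) := by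
          linear_combination (Complex.sin (w.2 : ℂ) / den w *
            Complex.exp (Complex.I * (w.1 * p1 + w.2 * p2))) * Complex.I_sq
      _ = (den w / den w) * Complex.exp (Complex.I * (w.1 * p1 + w.2 * p2)) := by
          rw [hden']
      _ = Complex.exp (Complex.I * (w.1 * p1 + w.2 * p2)) := by
          rw [div_self hden, one_mul]
  have hprod : (∫ w in Qset, Complex.exp (Complex.I * (w.1 * p1 + w.2 * p2))) =
      (∫ t in Icc (-π) π, Complex.exp (Complex.I * t * p1)) *
        ∫ t in Icc (-π) π, Complex.exp (Complex.I * t * p2) := by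
    rw [show (fun w : ℝ × ℝ => Complex.exp (Complex.I * (w.1 * p1 + w.2 * p2))) =
        fun w : ℝ × ℝ => Complex.exp (Complex.I * w.1 * p1) * Complex.exp (Complex.I * w.2 * p2)
      from funext hF]
    rw [show (volume : Measure (ℝ × ℝ)) = (volume : Measure ℝ).prod volume from
      Measure.volume_eq_prod ℝ ℝ, Qset]
    exact setIntegral_prod_mul (fun x : ℝ => Complex.exp (Complex.I * x * p1))
      (fun y : ℝ => Complex.exp (Complex.I * y * p2)) _ _
  have hval : dbarZ Efun (p1, p2) = ((1 / (4 * π^2) : ℝ) : ℂ) *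
      ((∫ t in Icc (-π) π, Complex.exp (Complex.I * t * p1)) *
        ∫ t in Icc (-π) π, Complex.exp (Complex.I * t * p2)) := by
    rw [← hprod, ← hsum]
    show (1/2 : ℂ) * (D1 Efun (p1, p2) + Complex.I * D2 Efun (p1, p2)) = _
    show (1/2 : ℂ) * ((Efun (p1 + 1, p2) - Efun (p1 - 1, p2)) / 2 +
      Complex.I * ((Efun (p1, p2 + 1) - Efun (p1, p2 - 1)) / 2)) = _
    rw [efun_val (p1+1) p2, efun_val (p1-1) p2, efun_val p1 (p2+1), efun_val p1 (p2-1)]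
    ring
  rw [hval, oneInt p1, oneInt p2]
  by_cases h1 : p1 = 0
  · by_cases h2 : p2 = 0
    · subst h1; subst h2
      have hπ : (π : ℂ) ≠ 0 := by exact_mod_cast Real.pi_ne_zero
      simp only [Prod.mk_eq_zero, and_self, eq_self_iff_true, if_true]
      field_simp
      push_cast
      field_simp
      norm_num
    · rw [if_pos h1, if_neg h2, mul_zero, mul_zero,
        if_neg (by simp [Prod.mk_eq_zero, h2])]
  · rw [if_neg h1, zero_mul, mul_zero, if_neg (by simp [Prod.mk_eq_zero, h1])]

/-! ### The summation identity on `ℤ × ℤ` -/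

def chiZ (S : Finset (ℤ × ℤ)) (p : ℤ × ℤ) : ℂ := if p ∈ S then 1 else 0

def bt (S : Finset (ℤ × ℤ)) (g : ℤ × ℤ → ℂ) (q : ℤ × ℤ) : ℤ × ℤ → ℂ := fun p =>
  (1/4 : ℂ) * (Efun (q - p + (1,0)) * (chiZ S p - chiZ S (p - (1,0)))
    + Efun (q - p - (1,0)) * (chiZ S (p + (1,0)) - chiZ S p)
    + Complex.I * Efun (q - p + (0,1)) * (chiZ S p - chiZ S (p - (0,1)))
    + Complex.I * Efun (q - p - (0,1)) * (chiZ S (p + (0,1)) - chiZ S p)) * g p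

def vt (S : Finset (ℤ × ℤ)) (g : ℤ × ℤ → ℂ) (q : ℤ × ℤ) : ℤ × ℤ → ℂ := fun p =>
  chiZ S p * (Efun (q - p) * dbarZ g p)

def t1 (S : Finset (ℤ × ℤ)) (g : ℤ × ℤ → ℂ) (q : ℤ × ℤ) : ℤ × ℤ → ℂ := fun p =>
  chiZ S p * ((1/4 : ℂ) * Efun (q - p) * g (p + (1,0)))
def t2 (S : Finset (ℤ × ℤ)) (g : ℤ × ℤ → ℂ) (q : ℤ × ℤ) : ℤ × ℤ → ℂ := fun p =>
  chiZ S p * ((1/4 : ℂ) * Efun (q - p) * g (p - (1,0)))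
def t3 (S : Finset (ℤ × ℤ)) (g : ℤ × ℤ → ℂ) (q : ℤ × ℤ) : ℤ × ℤ → ℂ := fun p =>
  chiZ S p * ((Complex.I/4 : ℂ) * Efun (q - p) * g (p + (0,1)))
def t4 (S : Finset (ℤ × ℤ)) (g : ℤ × ℤ → ℂ) (q : ℤ × ℤ) : ℤ × ℤ → ℂ := fun p =>
  chiZ S p * ((Complex.I/4 : ℂ) * Efun (q - p) * g (p - (0,1)))

lemma summable_chi (S : Finset (ℤ × ℤ)) (W : ℤ × ℤ → ℂ) :
    Summable (fun p => chiZ S p * W p) := by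
  apply summable_of_ne_finset_zero (s := S)
  intro p hp
  simp [chiZ, hp]

lemma summable_shift {f : ℤ × ℤ → ℂ} (hf : Summable f) (c : ℤ × ℤ) :
    Summable (fun p => f (p - c)) :=
  (Equiv.subRight c).summable_iff.mpr hf

lemma summable_shift' {f : ℤ × ℤ → ℂ} (hf : Summable f) (c : ℤ × ℤ) :
    Summable (fun p => f (p + c)) :=
  (Equiv.addRight c).summable_iff.mpr hf

lemma tsum_shift (f : ℤ × ℤ → ℂ) (c : ℤ × ℤ) :
    ∑' p, f (p - c) = ∑' p, f p :=
  (Equiv.subRight c).tsum_eq f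

lemma tsum_shift' (f : ℤ × ℤ → ℂ) (c : ℤ × ℤ) :
    ∑' p, f (p + c) = ∑' p, f p :=
  (Equiv.addRight c).tsum_eq f

lemma summable_bt (S : Finset (ℤ × ℤ)) (g : ℤ × ℤ → ℂ) (q : ℤ × ℤ) :
    Summable (bt S g q) := by
  classical
  apply summable_of_ne_finset_zero
    (s := S ∪ S.image (· + ((1,0) : ℤ × ℤ)) ∪ S.image (· - ((1,0) : ℤ × ℤ))
      ∪ S.image (· + ((0,1) : ℤ × ℤ)) ∪ S.image (· - ((0,1) : ℤ × ℤ)))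
  intro p hp
  simp only [Finset.mem_union, not_or, Finset.mem_image, not_exists, not_and] at hp
  obtain ⟨⟨⟨⟨h0, h1⟩, h2⟩, h3⟩, h4⟩ := hp
  have c0 : p ∉ S := h0
  have c1 : p - (1,0) ∉ S := fun hm => h1 _ hm (by ring)
  have c2 : p + (1,0) ∉ S := fun hm => h2 _ hm (by ring)
  have c3 : p - (0,1) ∉ S := fun hm => h3 _ hm (by ring)
  have c4 : p + (0,1) ∉ S := fun hm => h4 _ hm (by ring)
  simp [bt, chiZ, c0, c1, c2, c3, c4]

lemma main_sum (S : Finset (ℤ × ℤ)) (g : ℤ × ℤ → ℂ) (q : ℤ × ℤ) :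
    (∑' p, bt S g q p) + (∑' p, vt S g q p) = chiZ S q * g q := by
  classical
  have hS1 : Summable (t1 S g q) := summable_chi S _
  have hS2 : Summable (t2 S g q) := summable_chi S _
  have hS3 : Summable (t3 S g q) := summable_chi S _
  have hS4 : Summable (t4 S g q) := summable_chi S _
  -- step 1: vt = t1 - t2 + (t3 - t4) pointwise
  have hv : ∀ p, vt S g q p = (t1 S g q p - t2 S g q p) + (t3 S g q p - t4 S g q p) := by
    intro p
    have e1 : ((p.1 + 1, p.2) : ℤ × ℤ) = p + (1,0) := by ext <;> simp
    have e2 : ((p.1 - 1, p.2) : ℤ × ℤ) = p - (1,0) := by ext <;> simp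
    have e3 : ((p.1, p.2 + 1) : ℤ × ℤ) = p + (0,1) := by ext <;> simp
    have e4 : ((p.1, p.2 - 1) : ℤ × ℤ) = p - (0,1) := by ext <;> simp
    simp only [vt, t1, t2, t3, t4, dbarZ, D1, D2, e1, e2, e3, e4]
    ring
  -- step 2: shift sums
  have u1eq : ∑' p, t1 S g q (p - (1,0)) = ∑' p, t1 S g q p := tsum_shift _ _
  have u2eq : ∑' p, t2 S g q (p + (1,0)) = ∑' p, t2 S g q p := tsum_shift' _ _
  have u3eq : ∑' p, t3 S g q (p - (0,1)) = ∑' p, t3 S g q p := tsum_shift _ _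
  have u4eq : ∑' p, t4 S g q (p + (0,1)) = ∑' p, t4 S g q p := tsum_shift' _ _
  have hvt : ∑' p, vt S g q p =
      ((∑' p, t1 S g q (p - (1,0))) - ∑' p, t2 S g q (p + (1,0)))
      + ((∑' p, t3 S g q (p - (0,1))) - ∑' p, t4 S g q (p + (0,1))) := by
    rw [tsum_congr hv, Summable.tsum_add (hS1.sub hS2) (hS3.sub hS4), Summable.tsum_sub hS1 hS2,
      Summable.tsum_sub hS3 hS4, u1eq, u2eq, u3eq, u4eq]
  -- step 3: recombine into one tsum
  have hU1 : Summable (fun p => t1 S g q (p - (1,0))) := summable_shift hS1 _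
  have hU2 : Summable (fun p => t2 S g q (p + (1,0))) := summable_shift' hS2 _
  have hU3 : Summable (fun p => t3 S g q (p - (0,1))) := summable_shift hS3 _
  have hU4 : Summable (fun p => t4 S g q (p + (0,1))) := summable_shift' hS4 _
  rw [hvt, ← Summable.tsum_sub hU1 hU2, ← Summable.tsum_sub hU3 hU4,
    ← Summable.tsum_add (hU1.sub hU2) (hU3.sub hU4),
    ← Summable.tsum_add (summable_bt S g q) ((hU1.sub hU2).add (hU3.sub hU4))]
  -- step 4: pointwise delta identity
  have hpt : ∀ p, bt S g q p
      + ((t1 S g q (p - (1,0)) - t2 S g q (p + (1,0)))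
        + (t3 S g q (p - (0,1)) - t4 S g q (p + (0,1))))
      = if p = q then chiZ S q * g q else 0 := by
    intro p
    have hδ := dbarZ_efun (q - p)
    have e1 : (((q-p).1 + 1, (q-p).2) : ℤ × ℤ) = q - p + (1,0) := by ext <;> simp
    have e2 : (((q-p).1 - 1, (q-p).2) : ℤ × ℤ) = q - p - (1,0) := by ext <;> simp
    have e3 : (((q-p).1, (q-p).2 + 1) : ℤ × ℤ) = q - p + (0,1) := by ext <;> simp
    have e4 : (((q-p).1, (q-p).2 - 1) : ℤ × ℤ) = q - p - (0,1) := by ext <;> simp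
    rw [dbarZ, D1, D2, e1, e2, e3, e4] at hδ
    have h1 : p - (1,0) + (1,0) = p := by ring
    have h2 : q - (p - (1,0)) = q - p + (1,0) := by ring
    have h3 : p + (1,0) - (1,0) = p := by ring
    have h4 : q - (p + (1,0)) = q - p - (1,0) := by ring
    have h5 : p - (0,1) + (0,1) = p := by ring
    have h6 : q - (p - (0,1)) = q - p + (0,1) := by ring
    have h7 : p + (0,1) - (0,1) = p := by ring
    have h8 : q - (p + (0,1)) = q - p - (0,1) := by ring
    simp only [bt, t1, t2, t3, t4, h1, h2, h3, h4, h5, h6, h7, h8]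
    by_cases hpq : p = q
    · subst hpq
      rw [if_pos rfl]
      rw [if_pos (sub_self p)] at hδ
      linear_combination (chiZ S p * g p) * hδ
    · rw [if_neg hpq]
      rw [if_neg (fun h => hpq (by linear_combination -h))] at hδ
      linear_combination (chiZ S p * g p) * hδ
  rw [tsum_congr hpt, tsum_ite_eq q (fun _ => chiZ S q * g q)]

/-! ### Glue between the lattice in `ℂ` and `ℤ × ℤ` -/

def emb (h : ℝ) (p : ℤ × ℤ) : ℂ := (h:ℂ) * ((p.1:ℂ) + (p.2:ℂ) * Complex.I)

lemma emb_re (h : ℝ) (p : ℤ × ℤ) : (emb h p).re = h * p.1 := by simp [emb]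
lemma emb_im (h : ℝ) (p : ℤ × ℤ) : (emb h p).im = h * p.2 := by simp [emb]

lemma emb_inj {h : ℝ} (hh : 0 < h) : Function.Injective (emb h) := by
  intro p r hpr
  have h1 := congrArg Complex.re hpr
  have h2 := congrArg Complex.im hpr
  rw [emb_re, emb_re] at h1
  rw [emb_im, emb_im] at h2
  have e1 : (p.1 : ℝ) = r.1 := mul_left_cancel₀ (ne_of_gt hh) h1
  have e2 : (p.2 : ℝ) = r.2 := mul_left_cancel₀ (ne_of_gt hh) h2
  ext
  · exact_mod_cast e1
  · exact_mod_cast e2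

lemma latt_eq (h : ℝ) : latt h = Set.range (emb h) := by
  ext z
  constructor
  · rintro ⟨m, n, rfl⟩
    exact ⟨(m, n), rfl⟩
  · rintro ⟨p, rfl⟩
    exact ⟨p.1, p.2, rfl⟩

lemma Eh_emb {h : ℝ} (hh : 0 < h) (p : ℤ × ℤ) :
    Eh h (emb h p) = (1/h : ℂ) * Efun p := by
  unfold Eh
  rw [emb_re, emb_im, mul_div_cancel_left₀ _ (ne_of_gt hh),
    mul_div_cancel_left₀ _ (ne_of_gt hh), round_intCast, round_intCast]

lemma emb_add (h : ℝ) (p r : ℤ × ℤ) : emb h (p + r) = emb h p + emb h r := by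
  simp only [emb, Prod.fst_add, Prod.snd_add]
  push_cast
  ring

lemma emb_sub (h : ℝ) (p r : ℤ × ℤ) : emb h (p - r) = emb h p - emb h r := by
  simp only [emb, Prod.fst_sub, Prod.snd_sub]
  push_cast
  ring

lemma emb_e1 (h : ℝ) : emb h (1, 0) = (h:ℂ) := by simp [emb]
lemma emb_e2 (h : ℝ) : emb h (0, 1) = (h:ℂ) * Complex.I := by simp [emb]

section Glue

variable {h : ℝ} {B : Set ℂ} {S : Finset (ℤ × ℤ)}

lemma chi_emb (hS : ∀ p, p ∈ S ↔ emb h p ∈ B) (p : ℤ × ℤ) :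
    ((chi B (emb h p) : ℝ) : ℂ) = chiZ S p := by
  by_cases hp : emb h p ∈ B
  · simp [chi, chiZ, Set.indicator_of_mem hp, (hS p).mpr hp]
  · have hns : p ∉ S := fun hq => hp ((hS p).mp hq)
    simp [chi, chiZ, Set.indicator_of_notMem hp, hns]

lemma hd_dp1 (hh : 0 < h) (hS : ∀ p, p ∈ S ↔ emb h p ∈ B) (p : ℤ × ℤ) :
    chiZ S (p + (1,0)) - chiZ S p = (h:ℂ) * ((dp1 h (chi B) (emb h p) : ℝ) : ℂ) := by
  have harg : emb h p + (h:ℂ) = emb h (p + (1,0)) := by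
    rw [emb_add, emb_e1]
  rw [dp1, harg]
  push_cast
  rw [chi_emb hS, chi_emb hS]
  have hne : (h:ℂ) ≠ 0 := by exact_mod_cast (ne_of_gt hh)
  rw [mul_div_cancel₀ _ hne]

lemma hd_dm1 (hh : 0 < h) (hS : ∀ p, p ∈ S ↔ emb h p ∈ B) (p : ℤ × ℤ) :
    chiZ S p - chiZ S (p - (1,0)) = (h:ℂ) * ((dm1 h (chi B) (emb h p) : ℝ) : ℂ) := by
  have harg : emb h p - (h:ℂ) = emb h (p - (1,0)) := by
    rw [emb_sub, emb_e1]
  rw [dm1, harg]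
  push_cast
  rw [chi_emb hS, chi_emb hS]
  have hne : (h:ℂ) ≠ 0 := by exact_mod_cast (ne_of_gt hh)
  rw [mul_div_cancel₀ _ hne]

lemma hd_dp2 (hh : 0 < h) (hS : ∀ p, p ∈ S ↔ emb h p ∈ B) (p : ℤ × ℤ) :
    chiZ S (p + (0,1)) - chiZ S p = (h:ℂ) * ((dp2 h (chi B) (emb h p) : ℝ) : ℂ) := by
  have harg : emb h p + (h:ℂ) * Complex.I = emb h (p + (0,1)) := by
    rw [emb_add, emb_e2]
  rw [dp2, harg]
  push_cast
  rw [chi_emb hS, chi_emb hS]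
  have hne : (h:ℂ) ≠ 0 := by exact_mod_cast (ne_of_gt hh)
  rw [mul_div_cancel₀ _ hne]

lemma hd_dm2 (hh : 0 < h) (hS : ∀ p, p ∈ S ↔ emb h p ∈ B) (p : ℤ × ℤ) :
    chiZ S p - chiZ S (p - (0,1)) = (h:ℂ) * ((dm2 h (chi B) (emb h p) : ℝ) : ℂ) := by
  have harg : emb h p - (h:ℂ) * Complex.I = emb h (p - (0,1)) := by
    rw [emb_sub, emb_e2]
  rw [dm2, harg]
  push_cast
  rw [chi_emb hS, chi_emb hS]
  have hne : (h:ℂ) ≠ 0 := by exact_mod_cast (ne_of_gt hh)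
  rw [mul_div_cancel₀ _ hne]

lemma qsum_nonneg (z : ℂ) : 0 ≤ Qsum h B z := by
  unfold Qsum
  positivity

lemma qsum_zero_diffs {z : ℂ} (hq : Qsum h B z = 0) :
    dp1 h (chi B) z = 0 ∧ dm1 h (chi B) z = 0 ∧ dp2 h (chi B) z = 0 ∧ dm2 h (chi B) z = 0 := by
  unfold Qsum at hq
  constructor
  · nlinarith [sq_nonneg (dp1 h (chi B) z), sq_nonneg (dm1 h (chi B) z),
      sq_nonneg (dp2 h (chi B) z), sq_nonneg (dm2 h (chi B) z)]
  constructor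
  · nlinarith [sq_nonneg (dp1 h (chi B) z), sq_nonneg (dm1 h (chi B) z),
      sq_nonneg (dp2 h (chi B) z), sq_nonneg (dm2 h (chi B) z)]
  constructor
  · nlinarith [sq_nonneg (dp1 h (chi B) z), sq_nonneg (dm1 h (chi B) z),
      sq_nonneg (dp2 h (chi B) z), sq_nonneg (dm2 h (chi B) z)]
  · nlinarith [sq_nonneg (dp1 h (chi B) z), sq_nonneg (dm1 h (chi B) z),
      sq_nonneg (dp2 h (chi B) z), sq_nonneg (dm2 h (chi B) z)]

lemma bdry_term (hh : 0 < h) (hS : ∀ p, p ∈ S ↔ emb h p ∈ B)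
    (f : ℂ → ℂ) (q p : ℤ × ℤ) :
    Kker h B (emb h p) (emb h q) * f (emb h p) * ((sden h B (emb h p) : ℝ) : ℂ) =
      bt S (fun r => f (emb h r)) q p := by
  have hne : (h:ℂ) ≠ 0 := by exact_mod_cast (ne_of_gt hh)
  set z := emb h p with hz
  have a1 : (h:ℂ) - (z - emb h q) = emb h (q - p + (1,0)) := by
    rw [emb_add, emb_sub, emb_e1]; ring
  have a2 : -(h:ℂ) - (z - emb h q) = emb h (q - p - (1,0)) := by
    rw [emb_sub, emb_sub, emb_e1]; ring
  have a3 : (h:ℂ) * Complex.I - (z - emb h q) = emb h (q - p + (0,1)) := by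
    rw [emb_add, emb_sub, emb_e2]; ring
  have a4 : -((h:ℂ) * Complex.I) - (z - emb h q) = emb h (q - p - (0,1)) := by
    rw [emb_sub, emb_sub, emb_e2]; ring
  rw [Kker, a1, a2, a3, a4, Eh_emb hh, Eh_emb hh, Eh_emb hh, Eh_emb hh]
  rw [bt, hd_dp1 hh hS, hd_dm1 hh hS, hd_dp2 hh hS, hd_dm2 hh hS]
  rw [n1m, n1p, n2m, n2p, sden]
  by_cases hQ : Qsum h B z = 0
  · obtain ⟨z1, z2, z3, z4⟩ := qsum_zero_diffs hQ
    rw [hQ, z1, z2, z3, z4]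
    simp
  · have hQpos : 0 < Qsum h B z := lt_of_le_of_ne (qsum_nonneg z) (Ne.symm hQ)
    have hsq : Real.sqrt (Qsum h B z) ≠ 0 := by
      exact ne_of_gt (Real.sqrt_pos.mpr hQpos)
    have hsqC : ((Real.sqrt (Qsum h B z) : ℝ) : ℂ) ≠ 0 := by exact_mod_cast hsq
    push_cast
    field_simp
    ring

lemma vol_term (hh : 0 < h) (_hS : ∀ p, p ∈ S ↔ emb h p ∈ B)
    (f : ℂ → ℂ) (q p : ℤ × ℤ) (hp : p ∈ S) :
    Eh h (emb h q - emb h p) * dbarC h f (emb h p) * (h:ℂ)^2 =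
      vt S (fun r => f (emb h r)) q p := by
  have hne : (h:ℂ) ≠ 0 := by exact_mod_cast (ne_of_gt hh)
  have harg : emb h q - emb h p = emb h (q - p) := (emb_sub h q p).symm
  have hdb : dbarC h f (emb h p) = (1/h : ℂ) * dbarZ (fun r => f (emb h r)) p := by
    have b1 : emb h p + (h:ℂ) = emb h (p + (1,0)) := by rw [emb_add, emb_e1]
    have b2 : emb h p - (h:ℂ) = emb h (p - (1,0)) := by rw [emb_sub, emb_e1]
    have b3 : emb h p + (h:ℂ) * Complex.I = emb h (p + (0,1)) := by rw [emb_add, emb_e2]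
    have b4 : emb h p - (h:ℂ) * Complex.I = emb h (p - (0,1)) := by rw [emb_sub, emb_e2]
    have c1 : ((p.1 + 1 : ℤ), p.2) = p + (1,0) := by ext <;> simp
    have c2 : ((p.1 - 1 : ℤ), p.2) = p - (1,0) := by ext <;> simp
    have c3 : (p.1, (p.2 + 1 : ℤ)) = p + (0,1) := by ext <;> simp
    have c4 : (p.1, (p.2 - 1 : ℤ)) = p - (0,1) := by ext <;> simp
    rw [dbarC, cdp1, cdm1, cdp2, cdm2, b1, b2, b3, b4, dbarZ, D1, D2, c1, c2, c3, c4]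
    field_simp
    ring
  rw [harg, Eh_emb hh, hdb, vt, chiZ, if_pos hp]
  field_simp

end Glue

lemma bt_zero {h : ℝ} {B : Set ℂ} {S : Finset (ℤ × ℤ)}
    (hS : ∀ p, p ∈ S ↔ emb h p ∈ B) (g : ℤ × ℤ → ℂ) (q p : ℤ × ℤ)
    (hnd : emb h p ∉ dBdry h B) : bt S g q p = 0 := by
  have hlat : emb h p ∈ latt h := by
    rw [latt_eq]; exact Set.mem_range_self p
  have hb1 : emb h (p + (1,0)) = emb h p + (h:ℂ) := by rw [emb_add, emb_e1]
  have hb2 : emb h (p - (1,0)) = emb h p - (h:ℂ) := by rw [emb_sub, emb_e1]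
  have hb3 : emb h (p + (0,1)) = emb h p + (h:ℂ) * Complex.I := by rw [emb_add, emb_e2]
  have hb4 : emb h (p - (0,1)) = emb h p - (h:ℂ) * Complex.I := by rw [emb_sub, emb_e2]
  have hnd' : ¬((nbhd h (emb h p) ∩ B).Nonempty ∧ (nbhd h (emb h p) \ B).Nonempty) :=
    fun hcon => hnd ⟨hlat, hcon⟩
  rcases not_and_or.mp hnd' with h1 | h2
  · rw [Set.not_nonempty_iff_eq_empty] at h1
    have hout : ∀ z ∈ nbhd h (emb h p), z ∉ B := fun z hz hzB =>
      Set.eq_empty_iff_forall_notMem.mp h1 z ⟨hz, hzB⟩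
    have c0 : p ∉ S := fun hq =>
      hout (emb h p) (by simp [nbhd]) ((hS p).mp hq)
    have c1 : p + (1,0) ∉ S := fun hq =>
      hout (emb h (p + (1,0))) (by rw [hb1]; simp [nbhd]) ((hS _).mp hq)
    have c2 : p - (1,0) ∉ S := fun hq =>
      hout (emb h (p - (1,0))) (by rw [hb2]; simp [nbhd]) ((hS _).mp hq)
    have c3 : p + (0,1) ∉ S := fun hq =>
      hout (emb h (p + (0,1))) (by rw [hb3]; simp [nbhd]) ((hS _).mp hq)
    have c4 : p - (0,1) ∉ S := fun hq =>
      hout (emb h (p - (0,1))) (by rw [hb4]; simp [nbhd]) ((hS _).mp hq)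
    simp [bt, chiZ, c0, c1, c2, c3, c4]
  · rw [Set.not_nonempty_iff_eq_empty, Set.diff_eq_empty] at h2
    have d0 : p ∈ S := (hS p).mpr (h2 (by simp [nbhd]))
    have d1 : p + (1,0) ∈ S := (hS _).mpr (h2 (by rw [hb1]; simp [nbhd]))
    have d2 : p - (1,0) ∈ S := (hS _).mpr (h2 (by rw [hb2]; simp [nbhd]))
    have d3 : p + (0,1) ∈ S := (hS _).mpr (h2 (by rw [hb3]; simp [nbhd]))
    have d4 : p - (0,1) ∈ S := (hS _).mpr (h2 (by rw [hb4]; simp [nbhd]))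
    simp [bt, chiZ, d0, d1, d2, d3, d4]

end CPaux

/-- Discrete Cauchy-Pompeiu formula:
`χ_B(ζ) f(ζ) = ∫_{∂B} K^h(z,ζ) f(z) dS(z) + ∫_B E^h(ζ-z) ∂_z̄^h f(z) dV^h(z)`. -/
theorem stmt11 (h : ℝ) (hh : 0 < h) (B : Set ℂ) (hB : B ⊆ latt h)
    (hbd : Bornology.IsBounded B) (f : ℂ → ℂ) (ζ : ℂ) (hζ : ζ ∈ latt h) :
    B.indicator f ζ =
      (∑' z : (dBdry h B), Kker h B z ζ * f z * (sden h B z : ℂ)) +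
      ∑' z : B, Eh h (ζ - z) * dbarC h f z * (h : ℂ) ^ 2 := by
  classical
  open CPaux in
  obtain ⟨qm, qn, hq⟩ := hζ
  set q : ℤ × ℤ := (qm, qn) with hqdef
  have hζq : ζ = CPaux.emb h q := hq
  have hBsub : B ⊆ Set.range (CPaux.emb h) := by rw [← CPaux.latt_eq]; exact hB
  obtain ⟨R, hR⟩ := Bornology.IsBounded.exists_norm_le hbd
  -- finiteness of the preimage
  have hfin : (CPaux.emb h ⁻¹' B).Finite := by
    apply Set.Finite.subset
      ((Set.finite_Icc (-(⌈R / h⌉) : ℤ) ⌈R / h⌉).prod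
        (Set.finite_Icc (-(⌈R / h⌉) : ℤ) ⌈R / h⌉))
    intro p hp
    have hnorm : ‖CPaux.emb h p‖ ≤ R := hR _ hp
    have key : ∀ x : ℝ, |x| ≤ ‖CPaux.emb h p‖ → x ≤ h * (⌈R / h⌉ : ℤ) ∧
        -(h * (⌈R / h⌉ : ℤ)) ≤ x := by
      intro x hx
      have h1 : |x| ≤ R := hx.trans hnorm
      have h2 : R ≤ h * ⌈R / h⌉ := by
        have := Int.le_ceil (R / h)
        calc R = h * (R / h) := by field_simp
          _ ≤ h * ⌈R / h⌉ := by
            apply mul_le_mul_of_nonneg_left this (le_of_lt hh)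
      constructor
      · linarith [le_abs_self x]
      · linarith [neg_abs_le x]
    have hre := key (h * (p.1 : ℝ)) (by
      rw [← CPaux.emb_re h p]
      exact Complex.abs_re_le_norm _)
    have him := key (h * (p.2 : ℝ)) (by
      rw [← CPaux.emb_im h p]
      exact Complex.abs_im_le_norm _)
    constructor
    · simp only [Set.mem_Icc]
      constructor
      · have := hre.2
        rw [← mul_neg] at this
        have := le_of_mul_le_mul_left (by linarith : h * (-(⌈R/h⌉:ℤ):ℝ) ≤ h * (p.1:ℝ)) hh
        exact_mod_cast this
      · have := le_of_mul_le_mul_left (hre.1) hh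
        exact_mod_cast this
    · simp only [Set.mem_Icc]
      constructor
      · have := him.2
        rw [← mul_neg] at this
        have := le_of_mul_le_mul_left (by linarith : h * (-(⌈R/h⌉:ℤ):ℝ) ≤ h * (p.2:ℝ)) hh
        exact_mod_cast this
      · have := le_of_mul_le_mul_left (him.1) hh
        exact_mod_cast this
  set S : Finset (ℤ × ℤ) := hfin.toFinset with hSdef
  have hS : ∀ p, p ∈ S ↔ CPaux.emb h p ∈ B := by
    intro p
    rw [hSdef, Set.Finite.mem_toFinset]
    rfl
  set g : ℤ × ℤ → ℂ := fun r => f (CPaux.emb h r) with hgdef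
  -- left-hand side
  have hL : B.indicator f ζ = CPaux.chiZ S q * g q := by
    rw [hζq]
    by_cases hmem : CPaux.emb h q ∈ B
    · rw [Set.indicator_of_mem hmem, CPaux.chiZ, if_pos ((hS q).mpr hmem), one_mul]
    · rw [Set.indicator_of_notMem hmem, CPaux.chiZ,
        if_neg (fun hq' => hmem ((hS q).mp hq')), zero_mul]
  -- volume sum
  have hV : (∑' z : B, Eh h (ζ - z) * dbarC h f z * (h : ℂ) ^ 2) =
      ∑' p, CPaux.vt S g q p := by
    rw [tsum_subtype B (fun w => Eh h (ζ - w) * dbarC h f w * (h : ℂ) ^ 2)]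
    rw [← (CPaux.emb_inj hh).tsum_eq
      ((Set.support_indicator_subset).trans hBsub)]
    apply tsum_congr
    intro p
    by_cases hmem : CPaux.emb h p ∈ B
    · rw [Set.indicator_of_mem hmem, hζq]
      exact CPaux.vol_term hh hS f q p ((hS p).mpr hmem)
    · rw [Set.indicator_of_notMem hmem]
      have hns : p ∉ S := fun hq' => hmem ((hS p).mp hq')
      simp [CPaux.vt, CPaux.chiZ, hns]
  -- boundary sum
  have hdsub : dBdry h B ⊆ Set.range (CPaux.emb h) := by
    rw [← CPaux.latt_eq]
    exact fun z hz => hz.1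
  have hBd : (∑' z : (dBdry h B), Kker h B z ζ * f z * (sden h B z : ℂ)) =
      ∑' p, CPaux.bt S g q p := by
    rw [tsum_subtype (dBdry h B) (fun w => Kker h B w ζ * f w * (sden h B w : ℂ))]
    rw [← (CPaux.emb_inj hh).tsum_eq
      ((Set.support_indicator_subset).trans hdsub)]
    apply tsum_congr
    intro p
    by_cases hmem : CPaux.emb h p ∈ dBdry h B
    · rw [Set.indicator_of_mem hmem, hζq]
      exact CPaux.bdry_term hh hS f q p
    · rw [Set.indicator_of_notMem hmem]
      exact (CPaux.bt_zero hS g q p hmem).symm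
  rw [hL, hV, hBd]
  exact (CPaux.main_sum S g q).symm

end
end

section
/- (Holomorphicity of the discrete Bochner-Martinelli kernel) For fixed z ∈ ∂B, the function ζ ↦ K^h(z,ζ) satisfies ∂_ζ̄^h K^h(z,ζ) = 0 for all ζ ∉ ∂B and for all ζ ∉ N(z), where N(z) = {z, z±h, z±hi}. -/
noncomputable section
open Complex MeasureTheory Set
open scoped ENNReal

def gfun (w : ℝ × ℝ) : ℂ := 2 / (Complex.I * Real.sin w.1 - Real.sin w.2)
def box' : Set (ℝ × ℝ) := Set.Icc (-Real.pi) Real.pi ×ˢ Set.Icc (-Real.pi) Real.pi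
def epf (p : ℤ × ℤ) (w : ℝ × ℝ) : ℂ := Complex.exp (Complex.I * (w.1 * p.1 + w.2 * p.2))

lemma Efun_eq (p : ℤ × ℤ) :
    Efun p = (1 / (4 * Real.pi ^ 2) : ℝ) • ∫ w in box', gfun w * epf p w := rfl

lemma norm_aux (p : ℤ × ℤ) (w : ℝ × ℝ) : ‖gfun w * epf p w‖ = ‖gfun w‖ := by
  rw [norm_mul]
  have : ‖epf p w‖ = 1 := by
    rw [epf, Complex.norm_exp]
    have : (Complex.I * (w.1 * p.1 + w.2 * p.2)).re = 0 := by
      have : ((w.1 : ℂ) * p.1 + w.2 * p.2) = ((w.1 * p.1 + w.2 * p.2 : ℝ) : ℂ) := by push_cast; ring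
      rw [this]; simp
    rw [this, Real.exp_zero]
  rw [this, mul_one]

lemma meas_aux (p : ℤ × ℤ) :
    AEStronglyMeasurable (fun w => gfun w * epf p w) (volume.restrict box') := by
  apply Measurable.aestronglyMeasurable
  unfold gfun epf
  fun_prop

lemma integ_shift (p q : ℤ × ℤ)
    (hp : Integrable (fun w => gfun w * epf p w) (volume.restrict box')) :
    Integrable (fun w => gfun w * epf q w) (volume.restrict box') := by
  refine ⟨meas_aux q, ?_⟩
  have h : ∀ᵐ w : ℝ × ℝ ∂(volume.restrict box'),
      ‖gfun w * epf q w‖ = ‖gfun w * epf p w‖ := by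
    filter_upwards with w; rw [norm_aux, norm_aux]
  exact (hasFiniteIntegral_congr' h).mpr hp.2

lemma int_factor (k : ℤ) (hk : k ≠ 0) :
    ∫ x in Set.Icc (-Real.pi) Real.pi, Complex.exp (Complex.I * k * x) = 0 := by
  rw [integral_Icc_eq_integral_Ioc,
    ← intervalIntegral.integral_of_le (by linarith [Real.pi_pos] : -Real.pi ≤ Real.pi)]
  have hc : (Complex.I * k : ℂ) ≠ 0 := mul_ne_zero Complex.I_ne_zero (Int.cast_ne_zero.mpr hk)
  rw [integral_exp_mul_complex hc, div_eq_zero_iff]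
  left; rw [sub_eq_zero, Complex.exp_eq_exp_iff_exists_int]
  exact ⟨k, by push_cast; ring⟩

lemma int_epf (p : ℤ × ℤ) (hp : p ≠ 0) : ∫ w in box', epf p w = 0 := by
  have h1 : ∀ w : ℝ × ℝ, epf p w =
      Complex.exp (Complex.I * p.1 * w.1) * Complex.exp (Complex.I * p.2 * w.2) := by
    intro w; rw [epf, ← Complex.exp_add]; congr 1; ring
  calc ∫ w in box', epf p w
      = ∫ w in box', (fun x : ℝ => Complex.exp (Complex.I * p.1 * x)) w.1 *
          (fun y : ℝ => Complex.exp (Complex.I * p.2 * y)) w.2 := by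
        apply integral_congr_ae; filter_upwards with w; exact h1 w
    _ = (∫ x in Set.Icc (-Real.pi) Real.pi, Complex.exp (Complex.I * p.1 * x)) *
        (∫ y in Set.Icc (-Real.pi) Real.pi, Complex.exp (Complex.I * p.2 * y)) := by
        rw [box', show (volume : Measure (ℝ × ℝ)) = (volume : Measure ℝ).prod volume from rfl]
        exact setIntegral_prod_mul (L := ℂ) (fun x : ℝ => Complex.exp (Complex.I * p.1 * x)) (fun y : ℝ => Complex.exp (Complex.I * p.2 * y)) _ _
    _ = 0 := by
        by_cases h1 : p.1 = 0
        · have h2 : p.2 ≠ 0 := by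
            intro h2; exact hp (Prod.ext h1 h2)
          rw [int_factor p.2 h2, mul_zero]
        · rw [int_factor p.1 h1, zero_mul]

lemma hnull : (volume : Measure (ℝ × ℝ)) {w : ℝ × ℝ | Real.sin w.1 = 0 ∧ Real.sin w.2 = 0} = 0 := by
  have hsub : {w : ℝ × ℝ | Real.sin w.1 = 0 ∧ Real.sin w.2 = 0} ⊆
      ({x : ℝ | Real.sin x = 0} ×ˢ (Set.univ : Set ℝ)) := fun w hw => ⟨hw.1, trivial⟩
  refine measure_mono_null hsub ?_
  rw [show (volume : Measure (ℝ × ℝ)) = (volume : Measure ℝ).prod volume from rfl,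
    Measure.prod_prod]
  have hc : ({x : ℝ | Real.sin x = 0}).Countable := by
    have : {x : ℝ | Real.sin x = 0} = Set.range (fun n : ℤ => (n : ℝ) * Real.pi) := by
      ext x; simp only [Set.mem_setOf_eq, Set.mem_range]; exact Real.sin_eq_zero_iff
    rw [this]; exact Set.countable_range _
  rw [hc.measure_zero]; simp

lemma exp_diff (x : ℝ) :
    Complex.exp (Complex.I * x) - Complex.exp (-(Complex.I * x)) = 2 * Complex.I * Real.sin x := by
  rw [Complex.ofReal_sin, Complex.sin]; ring_nf
  rw [Complex.exp_neg]; field_simp; ring_nf; rw [Complex.I_sq]; ring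

lemma dbarZ_Efun_ne (p : ℤ × ℤ) (hp : p ≠ 0) : dbarZ Efun p = 0 := by
  set c : ℝ := 1 / (4 * Real.pi ^ 2) with hc
  set J : ℤ × ℤ → ℂ := fun q => ∫ w in box', gfun w * epf q w with hJ
  have hE : ∀ q, Efun q = (c : ℂ) * J q := by
    intro q; rw [Efun_eq, Complex.real_smul]
  have expand : dbarZ Efun p = (c : ℂ) * ((1/2) * ((J (p.1+1, p.2) - J (p.1-1, p.2))/2
      + Complex.I * ((J (p.1, p.2+1) - J (p.1, p.2-1))/2))) := by
    simp only [dbarZ, D1, D2, hE]; ring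
  by_cases hint : Integrable (fun w => gfun w * epf p w) (volume.restrict box')
  · have hq : ∀ q, Integrable (fun w => gfun w * epf q w) (volume.restrict box') :=
      fun q => integ_shift p q hint
    have shift1 : ∀ w : ℝ × ℝ, gfun w * epf (p.1+1, p.2) w - gfun w * epf (p.1-1, p.2) w
        = (2 * Complex.I * Real.sin w.1) * (gfun w * epf p w) := by
      intro w
      have e1 : epf (p.1+1, p.2) w = Complex.exp (Complex.I * w.1) * epf p w := by
        rw [epf, epf, ← Complex.exp_add]; congr 1; push_cast; ring
      have e2 : epf (p.1-1, p.2) w = Complex.exp (-(Complex.I * w.1)) * epf p w := by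
        rw [epf, epf, ← Complex.exp_add]; congr 1; push_cast; ring
      rw [e1, e2]; linear_combination (gfun w * epf p w) * exp_diff w.1
    have shift2 : ∀ w : ℝ × ℝ, gfun w * epf (p.1, p.2+1) w - gfun w * epf (p.1, p.2-1) w
        = (2 * Complex.I * Real.sin w.2) * (gfun w * epf p w) := by
      intro w
      have e1 : epf (p.1, p.2+1) w = Complex.exp (Complex.I * w.2) * epf p w := by
        rw [epf, epf, ← Complex.exp_add]; congr 1; push_cast; ring
      have e2 : epf (p.1, p.2-1) w = Complex.exp (-(Complex.I * w.2)) * epf p w := by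
        rw [epf, epf, ← Complex.exp_add]; congr 1; push_cast; ring
      rw [e1, e2]; linear_combination (gfun w * epf p w) * exp_diff w.2
    have hi1 : Integrable (fun w : ℝ × ℝ => (2 * Complex.I * Real.sin w.1) * (gfun w * epf p w))
        (volume.restrict box') := by
      refine ((hq (p.1+1, p.2)).sub (hq (p.1-1, p.2))).congr ?_
      filter_upwards with w; exact shift1 w
    have hi2 : Integrable (fun w : ℝ × ℝ => (2 * Complex.I * Real.sin w.2) * (gfun w * epf p w))
        (volume.restrict box') := by
      refine ((hq (p.1, p.2+1)).sub (hq (p.1, p.2-1))).congr ?_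
      filter_upwards with w; exact shift2 w
    have hd1 : J (p.1+1, p.2) - J (p.1-1, p.2)
        = ∫ w in box', (2 * Complex.I * Real.sin w.1) * (gfun w * epf p w) := by
      rw [hJ]; rw [← integral_sub (hq _) (hq _)]
      apply integral_congr_ae; filter_upwards with w; exact shift1 w
    have hd2 : J (p.1, p.2+1) - J (p.1, p.2-1)
        = ∫ w in box', (2 * Complex.I * Real.sin w.2) * (gfun w * epf p w) := by
      rw [hJ]; rw [← integral_sub (hq _) (hq _)]
      apply integral_congr_ae; filter_upwards with w; exact shift2 w
    have hsum : J (p.1+1, p.2) - J (p.1-1, p.2)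
        + Complex.I * (J (p.1, p.2+1) - J (p.1, p.2-1))
        = ∫ w in box', ((2 * Complex.I * Real.sin w.1) * (gfun w * epf p w)
            + Complex.I * ((2 * Complex.I * Real.sin w.2) * (gfun w * epf p w))) := by
      rw [hd1, hd2, ← integral_const_mul, ← integral_add hi1 (hi2.const_mul _)]
    have hae : ∀ᵐ w : ℝ × ℝ ∂(volume.restrict box'),
        (2 * Complex.I * Real.sin w.1) * (gfun w * epf p w)
          + Complex.I * ((2 * Complex.I * Real.sin w.2) * (gfun w * epf p w))
          = 4 * epf p w := by
      apply ae_restrict_of_ae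
      have h0 : ∀ᵐ w : ℝ × ℝ, ¬(Real.sin w.1 = 0 ∧ Real.sin w.2 = 0) := by
        rw [ae_iff]
        convert hnull using 2
        ext w; simp
      filter_upwards [h0] with w hw
      have hd : (Complex.I * Real.sin w.1 - Real.sin w.2 : ℂ) ≠ 0 := by
        intro h
        rw [Complex.ext_iff] at h
        simp at h
        exact hw ⟨h.2, h.1⟩
      calc (2 * Complex.I * Real.sin w.1) * (gfun w * epf p w)
            + Complex.I * ((2 * Complex.I * Real.sin w.2) * (gfun w * epf p w))
          = (2 * (Complex.I * Real.sin w.1 - Real.sin w.2)) * (gfun w * epf p w) := by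
            linear_combination (2 * ((Real.sin w.2 : ℂ)) * (gfun w * epf p w)) * Complex.I_sq
        _ = 4 * epf p w := by
            rw [gfun]
            rw [Complex.ofReal_sin, Complex.ofReal_sin] at hd
            rw [← Complex.ofReal_sin, ← Complex.ofReal_sin] at hd; field_simp
            ring
    have hfinal : J (p.1+1, p.2) - J (p.1-1, p.2)
        + Complex.I * (J (p.1, p.2+1) - J (p.1, p.2-1)) = 0 := by
      rw [hsum, integral_congr_ae hae, integral_const_mul, int_epf p hp, mul_zero]
    rw [expand]; linear_combination (c : ℂ)/4 * hfinal
  · have hnq : ∀ q, ¬ Integrable (fun w => gfun w * epf q w) (volume.restrict box') :=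
      fun q hcon => hint (integ_shift q p hcon)
    have hz : ∀ q, J q = 0 := fun q => integral_undef (hnq q)
    rw [expand, hz, hz, hz, hz]; simp

lemma Eh_latt (h : ℝ) (hh : 0 < h) (m n : ℤ) :
    Eh h ((h : ℂ) * ((m : ℂ) + (n : ℂ) * Complex.I)) = (1 / h : ℂ) * Efun (m, n) := by
  have hre : ((h : ℂ) * ((m : ℂ) + (n : ℂ) * Complex.I)).re = h * m := by
    have : ((h : ℂ) * ((m : ℂ) + (n : ℂ) * Complex.I))
        = Complex.ofReal (h * m) + Complex.ofReal (h * n) * Complex.I := by push_cast; ring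
    rw [this]; simp
  have him : ((h : ℂ) * ((m : ℂ) + (n : ℂ) * Complex.I)).im = h * n := by
    have : ((h : ℂ) * ((m : ℂ) + (n : ℂ) * Complex.I))
        = Complex.ofReal (h * m) + Complex.ofReal (h * n) * Complex.I := by push_cast; ring
    rw [this]; simp
  rw [Eh, hre, him, mul_div_cancel_left₀ _ (ne_of_gt hh),
    mul_div_cancel_left₀ _ (ne_of_gt hh), round_intCast, round_intCast]

lemma dbarC_Eh_shift (h : ℝ) (hh : 0 < h) (a ζ : ℂ) (q : ℤ × ℤ)
    (hq : a + ζ = (h : ℂ) * ((q.1 : ℂ) + (q.2 : ℂ) * Complex.I)) (hq0 : q ≠ 0) :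
    dbarC h (fun w => Eh h (a + w)) ζ = 0 := by
  have e0 : Eh h (a + ζ) = (1 / h : ℂ) * Efun (q.1, q.2) := by
    rw [hq]; exact Eh_latt h hh q.1 q.2
  have e1 : Eh h (a + (ζ + (h : ℂ))) = (1 / h : ℂ) * Efun (q.1 + 1, q.2) := by
    have heq : a + (ζ + (h : ℂ)) = (h : ℂ) * (((q.1 + 1 : ℤ) : ℂ) + (q.2 : ℂ) * Complex.I) := by
      push_cast; linear_combination hq
    rw [heq]; exact Eh_latt h hh (q.1 + 1) q.2
  have e2 : Eh h (a + (ζ - (h : ℂ))) = (1 / h : ℂ) * Efun (q.1 - 1, q.2) := by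
    have heq : a + (ζ - (h : ℂ)) = (h : ℂ) * (((q.1 - 1 : ℤ) : ℂ) + (q.2 : ℂ) * Complex.I) := by
      push_cast; linear_combination hq
    rw [heq]; exact Eh_latt h hh (q.1 - 1) q.2
  have e3 : Eh h (a + (ζ + (h : ℂ) * Complex.I)) = (1 / h : ℂ) * Efun (q.1, q.2 + 1) := by
    have heq : a + (ζ + (h : ℂ) * Complex.I)
        = (h : ℂ) * ((q.1 : ℂ) + ((q.2 + 1 : ℤ) : ℂ) * Complex.I) := by
      push_cast; linear_combination hq
    rw [heq]; exact Eh_latt h hh q.1 (q.2 + 1)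
  have e4 : Eh h (a + (ζ - (h : ℂ) * Complex.I)) = (1 / h : ℂ) * Efun (q.1, q.2 - 1) := by
    have heq : a + (ζ - (h : ℂ) * Complex.I)
        = (h : ℂ) * ((q.1 : ℂ) + ((q.2 - 1 : ℤ) : ℂ) * Complex.I) := by
      push_cast; linear_combination hq
    rw [heq]; exact Eh_latt h hh q.1 (q.2 - 1)
  have hz := dbarZ_Efun_ne q hq0
  simp only [dbarZ, D1, D2] at hz
  simp only [dbarC, cdp1, cdm1, cdp2, cdm2, e0, e1, e2, e3, e4]
  linear_combination (1 / (h : ℂ) ^ 2) * hz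

lemma dbarC_decomp (h : ℝ) (c1 c2 c3 c4 : ℂ) (f1 f2 f3 f4 : ℂ → ℂ) (ζ : ℂ) :
    dbarC h (fun w => c1 * f1 w + c2 * f2 w + c3 * f3 w + c4 * f4 w) ζ
      = c1 * dbarC h f1 ζ + c2 * dbarC h f2 ζ + c3 * dbarC h f3 ζ + c4 * dbarC h f4 ζ := by
  simp only [dbarC, cdp1, cdm1, cdp2, cdm2]; ring

lemma Kker_eq (h : ℝ) (B : Set ℂ) (z : ℂ) :
    (fun w => Kker h B z w) = fun w =>
      (-(n1m h B z : ℂ) / 4) * Eh h (((h : ℂ) - z) + w)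
      + (-(n1p h B z : ℂ) / 4) * Eh h ((-(h : ℂ) - z) + w)
      + (Complex.I * (-(n2m h B z : ℂ) / 4)) * Eh h (((h : ℂ) * Complex.I - z) + w)
      + (Complex.I * (-(n2p h B z : ℂ) / 4)) * Eh h ((-((h : ℂ) * Complex.I) - z) + w) := by
  funext w
  rw [Kker, show (h : ℂ) - (z - w) = ((h : ℂ) - z) + w from by ring,
    show -(h : ℂ) - (z - w) = (-(h : ℂ) - z) + w from by ring,
    show (h : ℂ) * Complex.I - (z - w) = ((h : ℂ) * Complex.I - z) + w from by ring,
    show -((h : ℂ) * Complex.I) - (z - w) = (-((h : ℂ) * Complex.I) - z) + w from by ring]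
  ring

lemma latt_shift (h : ℝ) (z : ℂ) (hz : z ∈ latt h) (a b : ℤ) :
    z + (h : ℂ) * ((a : ℂ) + (b : ℂ) * Complex.I) ∈ latt h := by
  obtain ⟨m, n, rfl⟩ := hz
  exact ⟨m + a, n + b, by push_cast; ring⟩

lemma bdry_of_chi_ne (h : ℝ) (B : Set ℂ) (y z : ℂ) (hyl : y ∈ latt h)
    (hzy : z ∈ nbhd h y) (hne : chi B z ≠ chi B y) : y ∈ dBdry h B := by
  classical
  have hchi : ∀ x, chi B x = if x ∈ B then 1 else 0 := fun x => Set.indicator_apply _ _ _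
  have hself : y ∈ nbhd h y := by simp [nbhd]
  by_cases hzB : z ∈ B <;> by_cases hyB : y ∈ B
  · exact absurd (by rw [hchi, hchi, if_pos hzB, if_pos hyB]) hne
  · exact ⟨hyl, ⟨z, hzy, hzB⟩, ⟨y, hself, hyB⟩⟩
  · exact ⟨hyl, ⟨y, hself, hyB⟩, ⟨z, hzy, hzB⟩⟩
  · exact absurd (by rw [hchi, hchi, if_neg hzB, if_neg hyB]) hne

lemma dm1_zero (h : ℝ) (B : Set ℂ) (z : ℂ) (hzl : z ∈ latt h)
    (hout : z - (h : ℂ) ∉ dBdry h B) : dm1 h (chi B) z = 0 := by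
  by_contra hne
  apply hout
  have hyl : z - (h : ℂ) ∈ latt h := by
    have := latt_shift h z hzl (-1) 0
    have heq : z + (h : ℂ) * (((-1 : ℤ) : ℂ) + ((0 : ℤ) : ℂ) * Complex.I) = z - h := by
      push_cast; ring
    rwa [heq] at this
  apply bdry_of_chi_ne h B _ z hyl
  · simp only [nbhd, Set.mem_insert_iff, Set.mem_singleton_iff]
    right; left; ring
  · intro heq
    apply hne
    rw [dm1, heq, sub_self, zero_div]

lemma dp1_zero (h : ℝ) (B : Set ℂ) (z : ℂ) (hzl : z ∈ latt h)
    (hout : z + (h : ℂ) ∉ dBdry h B) : dp1 h (chi B) z = 0 := by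
  by_contra hne
  apply hout
  have hyl : z + (h : ℂ) ∈ latt h := by
    have := latt_shift h z hzl 1 0
    have heq : z + (h : ℂ) * (((1 : ℤ) : ℂ) + ((0 : ℤ) : ℂ) * Complex.I) = z + h := by
      push_cast; ring
    rwa [heq] at this
  apply bdry_of_chi_ne h B _ z hyl
  · simp only [nbhd, Set.mem_insert_iff, Set.mem_singleton_iff]
    right; right; left; ring
  · intro heq
    apply hne
    rw [dp1, heq, sub_self, zero_div]

lemma dm2_zero (h : ℝ) (B : Set ℂ) (z : ℂ) (hzl : z ∈ latt h)
    (hout : z - (h : ℂ) * Complex.I ∉ dBdry h B) : dm2 h (chi B) z = 0 := by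
  by_contra hne
  apply hout
  have hyl : z - (h : ℂ) * Complex.I ∈ latt h := by
    have := latt_shift h z hzl 0 (-1)
    have heq : z + (h : ℂ) * (((0 : ℤ) : ℂ) + ((-1 : ℤ) : ℂ) * Complex.I)
        = z - h * Complex.I := by push_cast; ring
    rwa [heq] at this
  apply bdry_of_chi_ne h B _ z hyl
  · simp only [nbhd, Set.mem_insert_iff, Set.mem_singleton_iff]
    right; right; right; left; ring
  · intro heq
    apply hne
    rw [dm2, heq, sub_self, zero_div]

lemma dp2_zero (h : ℝ) (B : Set ℂ) (z : ℂ) (hzl : z ∈ latt h)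
    (hout : z + (h : ℂ) * Complex.I ∉ dBdry h B) : dp2 h (chi B) z = 0 := by
  by_contra hne
  apply hout
  have hyl : z + (h : ℂ) * Complex.I ∈ latt h := by
    have := latt_shift h z hzl 0 1
    have heq : z + (h : ℂ) * (((0 : ℤ) : ℂ) + ((1 : ℤ) : ℂ) * Complex.I)
        = z + h * Complex.I := by push_cast; ring
    rwa [heq] at this
  apply bdry_of_chi_ne h B _ z hyl
  · simp only [nbhd, Set.mem_insert_iff, Set.mem_singleton_iff]
    right; right; right; right; ring
  · intro heq
    apply hne
    rw [dp2, heq, sub_self, zero_div]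

lemma key_lemma (h : ℝ) (hh : 0 < h) (B : Set ℂ) (z : ℂ) (hzl : z ∈ latt h)
    (ζ : ℂ) (hζl : ζ ∈ latt h)
    (h1 : ζ = z - (h : ℂ) → dm1 h (chi B) z = 0)
    (h2 : ζ = z + (h : ℂ) → dp1 h (chi B) z = 0)
    (h3 : ζ = z - (h : ℂ) * Complex.I → dm2 h (chi B) z = 0)
    (h4 : ζ = z + (h : ℂ) * Complex.I → dp2 h (chi B) z = 0) :
    dbarC h (fun w => Kker h B z w) ζ = 0 := by
  obtain ⟨zm, zn, hzr⟩ := hzl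
  obtain ⟨cm, cn, hcr⟩ := hζl
  rw [Kker_eq, dbarC_decomp]
  have t1 : (-(n1m h B z : ℂ) / 4) * dbarC h (fun w => Eh h (((h : ℂ) - z) + w)) ζ = 0 := by
    by_cases hcase : ζ = z - (h : ℂ)
    · have : n1m h B z = 0 := by rw [n1m, h1 hcase]; norm_num
      rw [this]; norm_num
    · have hd : dbarC h (fun w => Eh h (((h : ℂ) - z) + w)) ζ = 0 := by
        apply dbarC_Eh_shift h hh _ _ (1 - zm + cm, cn - zn)
        · rw [hzr, hcr]; push_cast; ring
        · intro h0
          apply hcase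
          obtain ⟨ha, hb⟩ := Prod.mk.injEq _ _ _ _ ▸ h0
          have hcm : cm = zm - 1 := by omega
          have hcn : cn = zn := by omega
          rw [hcr, hzr, hcm, hcn]; push_cast; ring
      rw [hd, mul_zero]
  have t2 : (-(n1p h B z : ℂ) / 4) * dbarC h (fun w => Eh h ((-(h : ℂ) - z) + w)) ζ = 0 := by
    by_cases hcase : ζ = z + (h : ℂ)
    · have : n1p h B z = 0 := by rw [n1p, h2 hcase]; norm_num
      rw [this]; norm_num
    · have hd : dbarC h (fun w => Eh h ((-(h : ℂ) - z) + w)) ζ = 0 := by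
        apply dbarC_Eh_shift h hh _ _ (-1 - zm + cm, cn - zn)
        · rw [hzr, hcr]; push_cast; ring
        · intro h0
          apply hcase
          obtain ⟨ha, hb⟩ := Prod.mk.injEq _ _ _ _ ▸ h0
          have hcm : cm = zm + 1 := by omega
          have hcn : cn = zn := by omega
          rw [hcr, hzr, hcm, hcn]; push_cast; ring
      rw [hd, mul_zero]
  have t3 : (Complex.I * (-(n2m h B z : ℂ) / 4))
      * dbarC h (fun w => Eh h (((h : ℂ) * Complex.I - z) + w)) ζ = 0 := by
    by_cases hcase : ζ = z - (h : ℂ) * Complex.I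
    · have : n2m h B z = 0 := by rw [n2m, h3 hcase]; norm_num
      rw [this]; norm_num
    · have hd : dbarC h (fun w => Eh h (((h : ℂ) * Complex.I - z) + w)) ζ = 0 := by
        apply dbarC_Eh_shift h hh _ _ (cm - zm, 1 - zn + cn)
        · rw [hzr, hcr]; push_cast; ring
        · intro h0
          apply hcase
          obtain ⟨ha, hb⟩ := Prod.mk.injEq _ _ _ _ ▸ h0
          have hcm : cm = zm := by omega
          have hcn : cn = zn - 1 := by omega
          rw [hcr, hzr, hcm, hcn]; push_cast; ring
      rw [hd, mul_zero]
  have t4 : (Complex.I * (-(n2p h B z : ℂ) / 4))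
      * dbarC h (fun w => Eh h ((-((h : ℂ) * Complex.I) - z) + w)) ζ = 0 := by
    by_cases hcase : ζ = z + (h : ℂ) * Complex.I
    · have : n2p h B z = 0 := by rw [n2p, h4 hcase]; norm_num
      rw [this]; norm_num
    · have hd : dbarC h (fun w => Eh h ((-((h : ℂ) * Complex.I) - z) + w)) ζ = 0 := by
        apply dbarC_Eh_shift h hh _ _ (cm - zm, -1 - zn + cn)
        · rw [hzr, hcr]; push_cast; ring
        · intro h0
          apply hcase
          obtain ⟨ha, hb⟩ := Prod.mk.injEq _ _ _ _ ▸ h0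
          have hcm : cm = zm := by omega
          have hcn : cn = zn + 1 := by omega
          rw [hcr, hzr, hcm, hcn]; push_cast; ring
      rw [hd, mul_zero]
  rw [t1, t2, t3, t4]; ring

/-- Holomorphicity of the discrete Bochner-Martinelli kernel: for fixed
`z ∈ ∂B`, `ζ ↦ K^h(z,ζ)` is discrete holomorphic at every `ζ ∉ ∂B` and at every `ζ ∉ N(z)`. -/
theorem stmt13 (h : ℝ) (hh : 0 < h) (B : Set ℂ) (hB : B ⊆ latt h)
    (z : ℂ) (hz : z ∈ dBdry h B) :
    (∀ ζ ∈ latt h, ζ ∉ dBdry h B → dbarC h (fun w => Kker h B z w) ζ = 0) ∧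
    (∀ ζ ∈ latt h, ζ ∉ nbhd h z → dbarC h (fun w => Kker h B z w) ζ = 0) := by
  have hzl : z ∈ latt h := hz.1
  constructor
  · intro ζ hζl hζn
    apply key_lemma h hh B z hzl ζ hζl
    · intro hcase; exact dm1_zero h B z hzl (hcase ▸ hζn)
    · intro hcase; exact dp1_zero h B z hzl (hcase ▸ hζn)
    · intro hcase; exact dm2_zero h B z hzl (hcase ▸ hζn)
    · intro hcase; exact dp2_zero h B z hzl (hcase ▸ hζn)
  · intro ζ hζl hζn
    apply key_lemma h hh B z hzl ζ hζl
    · intro hcase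
      exact absurd (show ζ ∈ nbhd h z from by rw [hcase]; simp [nbhd]) hζn
    · intro hcase
      exact absurd (show ζ ∈ nbhd h z from by rw [hcase]; simp [nbhd]) hζn
    · intro hcase
      exact absurd (show ζ ∈ nbhd h z from by rw [hcase]; simp [nbhd]) hζn
    · intro hcase
      exact absurd (show ζ ∈ nbhd h z from by rw [hcase]; simp [nbhd]) hζn

end
end

section
/- Let B be a bounded open set in C and suppose B^h ⊂ Z_h^2 converges to B. Then for any open set U compactly contained in B, there exists δ > 0 such that for all h < δ, U ∩ Z_h^2 ⊂ B^h. -/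
noncomputable section
open Complex MeasureTheory Set
open scoped ENNReal

/-- Walking along a lattice path from a point of `S` to a point outside `S`, we meet the
discrete boundary of `S`; the boundary point found is within `h * (|m| + |n|)` of `z`. -/
lemma path_to_dBdry (h : ℝ) (hh : 0 < h) (S : Set ℂ) (hS : S ⊆ latt h)
    (z : ℂ) (hzS : z ∉ S) :
    ∀ k : ℕ, ∀ β : ℂ, β ∈ S → ∀ m n : ℤ, β - z = h * ((m : ℂ) + (n : ℂ) * Complex.I) →
      m.natAbs + n.natAbs = k →
      ∃ w ∈ dBdry h S, dist z w ≤ h * k := by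
  intro k
  induction k with
  | zero =>
    intro β hβ m n hβz hk
    have hm : m = 0 := by omega
    have hn : n = 0 := by omega
    subst hm; subst hn
    have : β = z := by
      have : β - z = 0 := by rw [hβz]; simp
      linear_combination this
    exact absurd (this ▸ hβ) hzS
  | succ k ih =>
    intro β hβ m n hβz hk
    have hdistβ : dist z β ≤ h * (k + 1 : ℕ) := by
      have h1 : dist z β = ‖(((m : ℂ) + (n : ℂ) * Complex.I))‖ * h := by
        rw [dist_comm, Complex.dist_eq, hβz, norm_mul, Complex.norm_real, Real.norm_eq_abs, abs_of_pos hh,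
          mul_comm]
      have h2 : ‖(((m : ℂ) + (n : ℂ) * Complex.I))‖ ≤ (m.natAbs + n.natAbs : ℝ) := by
        refine le_trans (Complex.norm_le_abs_re_add_abs_im _) ?_
        push_cast
        simp [Nat.cast_natAbs]
      rw [h1]
      calc ‖(((m : ℂ) + (n : ℂ) * Complex.I))‖ * h
          ≤ (m.natAbs + n.natAbs : ℝ) * h := by
            exact mul_le_mul_of_nonneg_right h2 hh.le
        _ = h * (k + 1 : ℕ) := by rw [← hk]; push_cast; ring
    rcases eq_or_ne m 0 with hm0 | hm0
    · -- move in the imaginary direction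
      have hn0 : n ≠ 0 := by omega
      set s : ℤ := if 0 < n then 1 else -1 with hs
      set β' : ℂ := β - (h : ℂ) * (s : ℂ) * Complex.I with hβ'
      have hβ'z : β' - z = h * (((m : ℂ)) + ((n - s : ℤ) : ℂ) * Complex.I) := by
        rw [hβ', sub_right_comm, hβz]; push_cast; ring
      have hkk : m.natAbs + (n - s).natAbs = k := by
        rcases lt_or_ge 0 n with hn | hn
        · simp only [hs, if_pos hn]; omega
        · simp only [hs, if_neg (not_lt.mpr hn)]; omega
      by_cases hβ'S : β' ∈ S
      · obtain ⟨w, hw, hwd⟩ := ih β' hβ'S m (n - s) hβ'z hkk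
        exact ⟨w, hw, le_trans hwd (by push_cast; nlinarith)⟩
      · refine ⟨β, ⟨hS hβ, ⟨β, Or.inl rfl, hβ⟩, ⟨β', ?_, hβ'S⟩⟩, hdistβ⟩
        rcases lt_or_ge 0 n with hn | hn
        · simp only [hs, if_pos hn] at hβ'
          have e : β' = β - (h : ℂ) * Complex.I := by rw [hβ']; push_cast; ring
          rw [e]; simp [nbhd]
        · simp only [hs, if_neg (not_lt.mpr hn)] at hβ'
          have e : β' = β + (h : ℂ) * Complex.I := by rw [hβ']; push_cast; ring
          rw [e]; simp [nbhd]
    · -- move in the real direction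
      set s : ℤ := if 0 < m then 1 else -1 with hs
      set β' : ℂ := β - (h : ℂ) * (s : ℂ) with hβ'
      have hβ'z : β' - z = h * ((((m - s : ℤ)) : ℂ) + (n : ℂ) * Complex.I) := by
        rw [hβ', sub_right_comm, hβz]; push_cast; ring
      have hkk : (m - s).natAbs + n.natAbs = k := by
        rcases lt_or_ge 0 m with hm | hm
        · simp only [hs, if_pos hm]; omega
        · simp only [hs, if_neg (not_lt.mpr hm)]; omega
      by_cases hβ'S : β' ∈ S
      · obtain ⟨w, hw, hwd⟩ := ih β' hβ'S (m - s) n hβ'z hkk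
        exact ⟨w, hw, le_trans hwd (by push_cast; nlinarith)⟩
      · refine ⟨β, ⟨hS hβ, ⟨β, Or.inl rfl, hβ⟩, ⟨β', ?_, hβ'S⟩⟩, hdistβ⟩
        rcases lt_or_ge 0 m with hm | hm
        · simp only [hs, if_pos hm] at hβ'
          have e : β' = β - (h : ℂ) := by rw [hβ']; push_cast; ring
          rw [e]; simp [nbhd]
        · simp only [hs, if_neg (not_lt.mpr hm)] at hβ'
          have e : β' = β + (h : ℂ) := by rw [hβ']; push_cast; ring
          rw [e]; simp [nbhd]

/-- Interior covering property: if `B^h → B` and `U` is open and compactly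
contained in `B`, then `U ∩ Z_h^2 ⊆ B^h` for all sufficiently small `h`. -/
theorem stmt16 (B : Set ℂ) (hB : IsOpen B) (hbd : Bornology.IsBounded B)
    (Bh : ℝ → Set ℂ) (hlat : ∀ h : ℝ, 0 < h → Bh h ⊆ latt h) (hconv : ConvergesTo Bh B)
    (U : Set ℂ) (hU : IsOpen U) (hUB : closure U ⊆ B) :
    ∃ δ > 0, ∀ h : ℝ, 0 < h → h < δ → U ∩ latt h ⊆ Bh h := by
  -- closure U is compact and contained in the open set B
  have hcU : IsCompact (closure U) :=
    Metric.isCompact_of_isClosed_isBounded isClosed_closure (hbd.subset hUB)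
  obtain ⟨ε, hε, hthick⟩ := hcU.exists_thickening_subset_open hB hUB
  obtain ⟨δ, hδ, hδconv⟩ := hconv (ε / 4) (by linarith)
  refine ⟨δ, hδ, fun h hh hhδ z hz => ?_⟩
  obtain ⟨hzU, hzlat⟩ := hz
  by_contra hzS
  obtain ⟨h1, h2, h3, h4⟩ := hδconv h hh hhδ
  have hzB : z ∈ B := hUB (subset_closure hzU)
  -- find β ∈ Bh h close to z
  obtain ⟨β, hβ, hβd⟩ := h3 z (subset_closure hzB)
  -- express β - z as a lattice vector
  obtain ⟨a, b, ha⟩ := hzlat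
  obtain ⟨c, d, hc⟩ := hlat h hh hβ
  have hdiff : β - z = h * (((c - a : ℤ) : ℂ) + ((d - b : ℤ) : ℂ) * Complex.I) := by
    rw [ha, hc]; push_cast; ring
  -- walk from β to z inside the lattice to find a discrete boundary point
  obtain ⟨w, hw, hwd⟩ := path_to_dBdry h hh (Bh h) (hlat h hh) z hzS
    ((c - a).natAbs + (d - b).natAbs) β hβ (c - a) (d - b) hdiff rfl
  -- the boundary point is close to z
  have hbound : h * (((c - a).natAbs + (d - b).natAbs : ℕ) : ℝ) ≤ 2 * dist z β := by
    have habs : dist z β = ‖(((c - a : ℤ) : ℂ) + ((d - b : ℤ) : ℂ) * Complex.I)‖ * h := by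
      rw [dist_comm, Complex.dist_eq, hdiff, norm_mul, Complex.norm_real, Real.norm_eq_abs, abs_of_pos hh]
      ring
    have h5 : |((c - a : ℤ) : ℝ)| ≤ ‖(((c - a : ℤ) : ℂ) + ((d - b : ℤ) : ℂ) * Complex.I)‖ := by
      have := Complex.abs_re_le_norm (((c - a : ℤ) : ℂ) + ((d - b : ℤ) : ℂ) * Complex.I)
      simpa using this
    have h6 : |((d - b : ℤ) : ℝ)| ≤ ‖(((c - a : ℤ) : ℂ) + ((d - b : ℤ) : ℂ) * Complex.I)‖ := by
      have := Complex.abs_im_le_norm (((c - a : ℤ) : ℂ) + ((d - b : ℤ) : ℂ) * Complex.I)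
      simpa using this
    have h7 : (((c - a).natAbs : ℝ)) = |((c - a : ℤ) : ℝ)| := by
      rw [Nat.cast_natAbs]; push_cast; ring
    have h8 : (((d - b).natAbs : ℝ)) = |((d - b : ℤ) : ℝ)| := by
      rw [Nat.cast_natAbs]; push_cast; ring
    rw [habs]
    push_cast at h5 h6 h7 h8 ⊢
    rw [h7, h8]
    nlinarith [mul_le_mul_of_nonneg_right h5 hh.le, mul_le_mul_of_nonneg_right h6 hh.le]
  have hzw : dist z w < ε / 2 := lt_of_le_of_lt (le_trans hwd hbound) (by linarith)
  -- the boundary point is close to the frontier of B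
  obtain ⟨γ, hγ, hγd⟩ := h2 w hw
  have hγz : dist γ z < ε := by
    have := dist_triangle γ w z
    rw [dist_comm γ w] at this
    rw [dist_comm w z] at this
    linarith
  have hγB : γ ∈ B := hthick (Metric.mem_thickening_iff.mpr ⟨z, subset_closure hzU, hγz⟩)
  rw [hB.frontier_eq] at hγ
  exact hγ.2 hγB

end
end
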